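/- arXiv:2312.09858 — 3 statements merged into one kernel-verified Lean document; each statement's English description precedes it below -/
import Mathlib

section
/- Let A ∈ ℝ^{m×n}, let 𝔹 = {x ∈ ℝ^n : ℓ ≤ x ≤ u} for given ℓ, u ∈ ℝ^n with ℓ < u (componentwise), and suppose ℝ^n and ℝ^m are endowed with Euclidean norms. Then H(P_{A,𝔹,{0}}) = max_{D ∈ 𝕊} H(P_{AD}) and H(P_{Aᵀ,ℝ^m,−𝔹}) = max_{D ∈ 𝕊} H(P_{AD}*), where 𝕊 is the set of n×n signature matrices. -/
open Matrix Set

noncomputable section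

/-- A norm on `Fin n → ℝ`, given as a function with the norm axioms. -/
structure IsNorm {n : ℕ} (ν : (Fin n → ℝ) → ℝ) : Prop where
  nonneg : ∀ x, 0 ≤ ν x
  eq_zero_iff : ∀ x, ν x = 0 ↔ x = 0
  smul : ∀ (a : ℝ) (x : Fin n → ℝ), ν (a • x) = |a| * ν x
  triangle : ∀ x y, ν (x + y) ≤ ν x + ν y

/-- The dual norm of `ν`, with respect to the standard dot-product pairing. -/
def dualNorm {n : ℕ} (ν : (Fin n → ℝ) → ℝ) (z : Fin n → ℝ) : ℝ :=
  sSup {r | ∃ x, ν x ≤ 1 ∧ r = z ⬝ᵥ x}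

/-- Point-to-set distance induced by the norm `ν`. -/
def distWith {n : ℕ} (ν : (Fin n → ℝ) → ℝ) (x : Fin n → ℝ) (S : Set (Fin n → ℝ)) : ℝ :=
  sInf ((fun s => ν (x - s)) '' S)

/-- The graph of a set-valued mapping. -/
def graphOf {p q : ℕ} (Φ : (Fin p → ℝ) → Set (Fin q → ℝ)) :
    Set ((Fin p → ℝ) × (Fin q → ℝ)) := {z | z.2 ∈ Φ z.1}

/-- The domain of a set-valued mapping. -/
def domOf {p q : ℕ} (Φ : (Fin p → ℝ) → Set (Fin q → ℝ)) : Set (Fin p → ℝ) :=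
  {u | (Φ u).Nonempty}

/-- The image of a set-valued mapping. -/
def imOf {p q : ℕ} (Φ : (Fin p → ℝ) → Set (Fin q → ℝ)) : Set (Fin q → ℝ) :=
  ⋃ u, Φ u

/-- The inverse of a set-valued mapping. -/
def invOf {p q : ℕ} (Φ : (Fin p → ℝ) → Set (Fin q → ℝ)) : (Fin q → ℝ) → Set (Fin p → ℝ) :=
  fun v => {u | v ∈ Φ u}

/-- A polyhedron: an intersection of finitely many closed half-spaces. -/
def IsPolyhedron {E : Type*} [AddCommGroup E] [Module ℝ E] (S : Set E) : Prop :=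
  ∃ (k : ℕ) (f : Fin k → E →ₗ[ℝ] ℝ) (c : Fin k → ℝ), S = {x | ∀ i, f i x ≤ c i}

/-- A set-valued mapping is polyhedral if its graph is a polyhedron. -/
def IsPolyhedralMapping {p q : ℕ} (Φ : (Fin p → ℝ) → Set (Fin q → ℝ)) : Prop :=
  IsPolyhedron (graphOf Φ)

/-- A set-valued mapping is sublinear if its graph is a convex cone containing the origin. -/
def IsSublinearMapping {p q : ℕ} (Φ : (Fin p → ℝ) → Set (Fin q → ℝ)) : Prop :=
  (0 : Fin q → ℝ) ∈ Φ 0 ∧ Convex ℝ (graphOf Φ) ∧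
    ∀ (t : ℝ), 0 ≤ t → ∀ z ∈ graphOf Φ, t • z ∈ graphOf Φ

/-- The Hoffman constant of a set-valued mapping, with respect to the norms `νp, νq`. -/
def hoffmanConst {p q : ℕ} (νp : (Fin p → ℝ) → ℝ) (νq : (Fin q → ℝ) → ℝ)
    (Φ : (Fin p → ℝ) → Set (Fin q → ℝ)) : ℝ :=
  sSup {r | ∃ u v, u ∈ domOf Φ ∧ v ∈ imOf Φ ∧ v ∉ Φ u ∧
    r = distWith νq v (Φ u) / distWith νp u (invOf Φ v)}

/-- The norm of a sublinear set-valued mapping, with respect to the norms `νp, νq`. -/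
def svmNorm {p q : ℕ} (νp : (Fin p → ℝ) → ℝ) (νq : (Fin q → ℝ) → ℝ)
    (Φ : (Fin p → ℝ) → Set (Fin q → ℝ)) : ℝ :=
  sSup {r | ∃ u, u ∈ domOf Φ ∧ νp u ≤ 1 ∧ r = sInf (νq '' Φ u)}

/-- The tangent cone to a set `G` at a point `g ∈ G`. -/
def polyTangentCone {E : Type*} [AddCommGroup E] [Module ℝ E] (G : Set E) (g : E) : Set E :=
  {d | ∃ t : ℝ, 0 < t ∧ g + t • d ∈ G}

/-- The collection of tangent cones to the graph of `Φ`. -/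
def tangentCones {p q : ℕ} (Φ : (Fin p → ℝ) → Set (Fin q → ℝ)) :
    Set (Set ((Fin p → ℝ) × (Fin q → ℝ))) :=
  {T | ∃ u v, v ∈ Φ u ∧ T = polyTangentCone (graphOf Φ) (u, v)}

/-- The set-valued mapping whose graph is `T`. -/
def mapOfGraph {p q : ℕ} (T : Set ((Fin p → ℝ) × (Fin q → ℝ))) :
    (Fin p → ℝ) → Set (Fin q → ℝ) := fun w => {z | (w, z) ∈ T}

/-- A subset is a linear subspace if it is the underlying set of a submodule. -/
def IsLinearSubspace {E : Type*} [AddCommGroup E] [Module ℝ E] (S : Set E) : Prop :=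
  ∃ W : Submodule ℝ E, S = ↑W

/-- The upper adjoint of a sublinear mapping. -/
def upperAdjoint {p q : ℕ} (Φ : (Fin p → ℝ) → Set (Fin q → ℝ)) :
    (Fin q → ℝ) → Set (Fin p → ℝ) :=
  fun w => {z | ∀ u v, v ∈ Φ u → z ⬝ᵥ u ≤ w ⬝ᵥ v}

/-- The solution mapping `b ↦ {x ∈ R : Ax - b ∈ S}`. -/
def solMap {m n : ℕ} (A : Matrix (Fin m) (Fin n) ℝ) (R : Set (Fin n → ℝ))
    (S : Set (Fin m → ℝ)) : (Fin m → ℝ) → Set (Fin n → ℝ) :=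
  fun b => {x | x ∈ R ∧ A *ᵥ x - b ∈ S}

/-- The dual cone `{z : ⟨z,x⟩ ≥ 0 for all x ∈ C}`. -/
def dualConeOf {n : ℕ} (C : Set (Fin n → ℝ)) : Set (Fin n → ℝ) :=
  {z | ∀ x ∈ C, 0 ≤ z ⬝ᵥ x}

/-- A polyhedral cone. -/
def IsPolyhedralCone {n : ℕ} (C : Set (Fin n → ℝ)) : Prop :=
  IsPolyhedron C ∧ (0 : Fin n → ℝ) ∈ C ∧ ∀ (t : ℝ), 0 ≤ t → ∀ x ∈ C, t • x ∈ C

/-- The dual solution mapping `c ↦ {y ∈ S* : c - Aᵀy ∈ R*}`. -/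
def dualSolMap {m n : ℕ} (A : Matrix (Fin m) (Fin n) ℝ) (R : Set (Fin n → ℝ))
    (S : Set (Fin m → ℝ)) : (Fin n → ℝ) → Set (Fin m → ℝ) :=
  fun c => {y | y ∈ dualConeOf S ∧ c - Aᵀ *ᵥ y ∈ dualConeOf R}

/-- The box `{x : ℓ ≤ x ≤ u}`. -/
def boxSet {n : ℕ} (ℓ u : Fin n → ℝ) : Set (Fin n → ℝ) :=
  {x | ∀ i, ℓ i ≤ x i ∧ x i ≤ u i}

/-- The nonnegative orthant of `ℝ^n`. -/
def nonnegOrthant (n : ℕ) : Set (Fin n → ℝ) := {x | ∀ i, 0 ≤ x i}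

/-- The Euclidean norm on `Fin n → ℝ`. -/
def euclNorm {n : ℕ} (x : Fin n → ℝ) : ℝ := Real.sqrt (∑ i, x i ^ 2)

/-- The operator norm induced by the Euclidean norms. -/
def opNorm2 {m n : ℕ} (M : Matrix (Fin m) (Fin n) ℝ) : ℝ :=
  sSup {r | ∃ x, euclNorm x ≤ 1 ∧ r = euclNorm (M *ᵥ x)}

/-- The chi condition measure `χ(A) = sup_{D} ‖(ADAᵀ)⁻¹AD‖₂`. -/
def chiMeasure {m n : ℕ} (A : Matrix (Fin m) (Fin n) ℝ) : ℝ :=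
  sSup {r | ∃ d : Fin n → ℝ, (∀ i, 0 < d i) ∧
    r = opNorm2 ((A * Matrix.diagonal d * Aᵀ)⁻¹ * (A * Matrix.diagonal d))}

/-- The chi-bar condition measure `χ̄(A) = sup_{D} ‖Aᵀ(ADAᵀ)⁻¹AD‖₂`. -/
def chiBarMeasure {m n : ℕ} (A : Matrix (Fin m) (Fin n) ℝ) : ℝ :=
  sSup {r | ∃ d : Fin n → ℝ, (∀ i, 0 < d i) ∧
    r = opNorm2 (Aᵀ * (A * Matrix.diagonal d * Aᵀ)⁻¹ * (A * Matrix.diagonal d))}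

/-- The orthogonal complement (w.r.t. the dot product) of a set. -/
def perpOf {m : ℕ} (L : Set (Fin m → ℝ)) : Set (Fin m → ℝ) :=
  {y | ∀ s ∈ L, y ⬝ᵥ s = 0}

/-- The mapping `P_A : b ↦ {x ≥ 0 : Ax = b}`. -/
def PA {m n : ℕ} (A : Matrix (Fin m) (Fin n) ℝ) : (Fin m → ℝ) → Set (Fin n → ℝ) :=
  fun b => {x | (∀ i, 0 ≤ x i) ∧ A *ᵥ x = b}

/-- The mapping `P_A* : c ↦ {y : Aᵀy ≤ c}`. -/
def PAstar {m n : ℕ} (A : Matrix (Fin m) (Fin n) ℝ) : (Fin n → ℝ) → Set (Fin m → ℝ) :=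
  fun c => {y | ∀ i, (Aᵀ *ᵥ y) i ≤ c i}

/-- Signature vectors: entries equal to `1` or `-1`. -/
def IsSignVector {n : ℕ} (d : Fin n → ℝ) : Prop := ∀ i, d i = 1 ∨ d i = -1

end

namespace Stmt11Aux

open Matrix Set

variable {k m n : ℕ}

lemma dot_self_nonneg (x : Fin k → ℝ) : 0 ≤ x ⬝ᵥ x :=
  Finset.sum_nonneg fun i _ => mul_self_nonneg _

lemma en_eq_sqrt_dot (x : Fin k → ℝ) : euclNorm x = Real.sqrt (x ⬝ᵥ x) := by
  simp [euclNorm, dotProduct, sq]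

lemma en_nonneg (x : Fin k → ℝ) : 0 ≤ euclNorm x := Real.sqrt_nonneg _

lemma en_sq (x : Fin k → ℝ) : euclNorm x ^ 2 = x ⬝ᵥ x := by
  rw [en_eq_sqrt_dot, Real.sq_sqrt (dot_self_nonneg x)]

lemma en_eq_zero_iff (x : Fin k → ℝ) : euclNorm x = 0 ↔ x = 0 := by
  rw [euclNorm, Real.sqrt_eq_zero (Finset.sum_nonneg fun i _ => sq_nonneg _)]
  constructor
  · intro h
    funext i
    have := (Finset.sum_eq_zero_iff_of_nonneg (fun i _ => sq_nonneg (x i))).1 h i (Finset.mem_univ i)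
    exact pow_eq_zero_iff (two_ne_zero) |>.1 this
  · rintro rfl; simp

@[simp] lemma en_zero : euclNorm (0 : Fin k → ℝ) = 0 := by simp [euclNorm]

lemma en_pos_of_ne (x : Fin k → ℝ) (hx : x ≠ 0) : 0 < euclNorm x :=
  lt_of_le_of_ne (en_nonneg x) fun h => hx ((en_eq_zero_iff x).1 h.symm)

lemma en_le_of_dot_le {x y : Fin k → ℝ} (h : x ⬝ᵥ x ≤ y ⬝ᵥ y) : euclNorm x ≤ euclNorm y := by
  rw [en_eq_sqrt_dot, en_eq_sqrt_dot]; exact Real.sqrt_le_sqrt h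

lemma en_smul (t : ℝ) (x : Fin k → ℝ) : euclNorm (t • x) = |t| * euclNorm x := by
  rw [euclNorm, euclNorm]
  have : ∑ i, (t • x) i ^ 2 = t ^ 2 * ∑ i, x i ^ 2 := by
    rw [Finset.mul_sum]; congr 1; funext i; simp [mul_pow]
  rw [this, Real.sqrt_mul (sq_nonneg t), Real.sqrt_sq_eq_abs]

lemma en_neg (x : Fin k → ℝ) : euclNorm (-x) = euclNorm x := by
  simp [euclNorm]

lemma en_sub_comm (x y : Fin k → ℝ) : euclNorm (x - y) = euclNorm (y - x) := by
  rw [← en_neg (x - y), neg_sub]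

lemma abs_coord_le (x : Fin k → ℝ) (i : Fin k) : |x i| ≤ euclNorm x := by
  rw [euclNorm, ← Real.sqrt_sq_eq_abs]
  exact Real.sqrt_le_sqrt (Finset.single_le_sum (fun j _ => sq_nonneg (x j)) (Finset.mem_univ i))

lemma continuous_en : Continuous (euclNorm (n := k)) := by
  unfold euclNorm
  exact Real.continuous_sqrt.comp (continuous_finset_sum _ fun i _ => (continuous_apply i).pow 2)

lemma en_mul_sign {d : Fin k → ℝ} (hd : ∀ i, d i = 1 ∨ d i = -1) (x : Fin k → ℝ) :
    euclNorm (d * x) = euclNorm x := by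
  rw [euclNorm, euclNorm]
  congr 1
  apply Finset.sum_congr rfl
  intro i _
  rcases hd i with h | h <;> simp [Pi.mul_apply, h, mul_pow]

lemma sign_mul_cancel {d : Fin k → ℝ} (hd : ∀ i, d i = 1 ∨ d i = -1) (x : Fin k → ℝ) :
    d * (d * x) = x := by
  funext i
  rcases hd i with h | h <;> simp [Pi.mul_apply, h]

/- distWith lemmas -/

lemma bddBelow_img (x : Fin k → ℝ) (S : Set (Fin k → ℝ)) :
    BddBelow ((fun s => euclNorm (x - s)) '' S) := by
  refine ⟨0, ?_⟩
  rintro r ⟨s, _, rfl⟩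
  exact en_nonneg _

lemma distWith_nonneg (x : Fin k → ℝ) (S : Set (Fin k → ℝ)) : 0 ≤ distWith euclNorm x S := by
  rcases S.eq_empty_or_nonempty with rfl | hS
  · simp [distWith, Real.sInf_empty]
  · exact Real.sInf_nonneg (by rintro r ⟨s, _, rfl⟩; exact en_nonneg _)

lemma distWith_le {x s : Fin k → ℝ} {S : Set (Fin k → ℝ)} (hs : s ∈ S) :
    distWith euclNorm x S ≤ euclNorm (x - s) :=
  csInf_le (bddBelow_img x S) ⟨s, hs, rfl⟩

lemma le_distWith {x : Fin k → ℝ} {S : Set (Fin k → ℝ)} (hS : S.Nonempty) {c : ℝ}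
    (h : ∀ s ∈ S, c ≤ euclNorm (x - s)) : c ≤ distWith euclNorm x S := by
  refine le_csInf (hS.image _) ?_
  rintro r ⟨s, hs, rfl⟩
  exact h s hs

lemma distWith_singleton (x a : Fin k → ℝ) : distWith euclNorm x {a} = euclNorm (x - a) := by
  simp [distWith]

lemma distWith_eq_of_min {x p : Fin k → ℝ} {S : Set (Fin k → ℝ)} (hp : p ∈ S)
    (h : ∀ s ∈ S, euclNorm (x - p) ≤ euclNorm (x - s)) :
    distWith euclNorm x S = euclNorm (x - p) :=
  le_antisymm (distWith_le hp) (le_distWith ⟨p, hp⟩ h)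

lemma distWith_zero_of_mem {x : Fin k → ℝ} {S : Set (Fin k → ℝ)} (h : x ∈ S) :
    distWith euclNorm x S = 0 :=
  le_antisymm (by have := distWith_le (x := x) h; simpa [sub_self] using this) (distWith_nonneg x S)

lemma distWith_mono {x : Fin k → ℝ} {S T : Set (Fin k → ℝ)} (hST : S ⊆ T) (hS : S.Nonempty) :
    distWith euclNorm x T ≤ distWith euclNorm x S := by
  refine le_csInf (hS.image _) ?_
  rintro r ⟨s, hs, rfl⟩
  exact distWith_le (hST hs)

end Stmt11Aux
namespace Stmt11Aux

open Matrix Set Pointwise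

variable {k m n : ℕ}

lemma exists_min {S : Set (Fin k → ℝ)} (hS : S.Nonempty) (hcl : IsClosed S) (x : Fin k → ℝ) :
    ∃ p ∈ S, ∀ s ∈ S, euclNorm (x - p) ≤ euclNorm (x - s) := by
  obtain ⟨s₀, hs₀⟩ := hS
  set R := euclNorm (x - s₀) with hR
  set S' := S ∩ {s | euclNorm (x - s) ≤ R} with hS'
  have hcont : Continuous fun s : Fin k → ℝ => euclNorm (x - s) :=
    continuous_en.comp (continuous_const.sub continuous_id)
  have hcl' : IsClosed S' := hcl.inter (isClosed_le hcont continuous_const)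
  have hbd : S' ⊆ Set.pi Set.univ (fun i => Set.Icc (x i - R) (x i + R)) := by
    rintro s ⟨_, hsR⟩ i _
    have := abs_coord_le (x - s) i
    have h2 : |x i - s i| ≤ R := le_trans (by simpa using this) hsR
    rw [abs_le] at h2
    constructor <;> [linarith [h2.2]; linarith [h2.1]]
  have hcomp : IsCompact S' :=
    (isCompact_univ_pi fun i => isCompact_Icc).of_isClosed_subset hcl' hbd
  have hs₀' : s₀ ∈ S' := ⟨hs₀, by simp only [Set.mem_setOf_eq, hR]; exact le_rfl⟩
  have hne : S'.Nonempty := ⟨s₀, hs₀'⟩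
  obtain ⟨p, hpS', hpmin⟩ := hcomp.exists_isMinOn hne hcont.continuousOn
  refine ⟨p, hpS'.1, fun s hs => ?_⟩
  by_cases h : euclNorm (x - s) ≤ R
  · exact hpmin ⟨hs, h⟩
  · exact le_trans (hpmin hs₀') (le_of_not_ge h)

lemma distWith_pos {S : Set (Fin k → ℝ)} (hS : S.Nonempty) (hcl : IsClosed S)
    {x : Fin k → ℝ} (hx : x ∉ S) : 0 < distWith euclNorm x S := by
  obtain ⟨p, hp, hmin⟩ := exists_min hS hcl x
  rw [distWith_eq_of_min hp hmin]
  refine en_pos_of_ne _ fun h => hx ?_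
  have : x = p := by rwa [sub_eq_zero] at h
  exact this ▸ hp

/-- Scaling/correspondence lemma for distWith. -/
lemma distWith_image {S : Set (Fin k → ℝ)} {φ : (Fin k → ℝ) → (Fin m → ℝ)}
    {x : Fin k → ℝ} {x' : Fin m → ℝ} {t : ℝ} (ht : 0 ≤ t)
    (hφ : ∀ s ∈ S, euclNorm (x' - φ s) = t * euclNorm (x - s)) :
    distWith euclNorm x' (φ '' S) = t * distWith euclNorm x S := by
  rcases S.eq_empty_or_nonempty with rfl | hS
  · simp [distWith, Real.sInf_empty]
  have himg : (fun s => euclNorm (x' - s)) '' (φ '' S) =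
      t • ((fun s => euclNorm (x - s)) '' S) := by
    ext r
    constructor
    · rintro ⟨s', ⟨s, hs, rfl⟩, rfl⟩
      exact ⟨euclNorm (x - s), ⟨s, hs, rfl⟩, (smul_eq_mul _ _).trans (hφ s hs).symm⟩
    · rintro ⟨r', ⟨s, hs, rfl⟩, rfl⟩
      exact ⟨φ s, ⟨s, hs, rfl⟩, by simp only [smul_eq_mul]; exact hφ s hs⟩
  rw [distWith, distWith, himg, Real.sInf_smul_of_nonneg ht, smul_eq_mul]

/-- From the variational inequality, `p` is a closest point. -/
lemma norm_le_of_inner_nonpos {v p w : Fin k → ℝ} (h : (v - p) ⬝ᵥ (w - p) ≤ 0) :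
    euclNorm (v - p) ≤ euclNorm (v - w) := by
  apply en_le_of_dot_le
  have hid : v - w = (v - p) - (w - p) := by ring_nf
  rw [hid]
  set a := v - p
  set b := w - p
  have h1 : (a - b) ⬝ᵥ (a - b) = a ⬝ᵥ a - 2 * (a ⬝ᵥ b) + b ⬝ᵥ b := by
    simp [sub_dotProduct, dotProduct_sub, dotProduct_comm b a]
    ring
  have h2 := dot_self_nonneg b
  linarith [h1]

/-- If `p` is a closest point in `S` to `v` and small segments towards `w` stay in `S`,
then the variational inequality holds at `w`. -/
lemma inner_nonpos_of_min {v p w : Fin k → ℝ} {S : Set (Fin k → ℝ)}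
    (hmin : ∀ s ∈ S, euclNorm (v - p) ≤ euclNorm (v - s))
    {t₀ : ℝ} (ht₀ : 0 < t₀)
    (hseg : ∀ t : ℝ, 0 < t → t ≤ t₀ → p + t • (w - p) ∈ S) :
    (v - p) ⬝ᵥ (w - p) ≤ 0 := by
  set a := v - p
  set b := w - p
  by_contra hpos
  push_neg at hpos
  have hb : 0 < b ⬝ᵥ b := by
    rcases eq_or_ne b 0 with hb0 | hb0
    · rw [hb0] at hpos; simp at hpos
    · have := en_pos_of_ne b hb0
      have h2 := en_sq b
      nlinarith
  set t := min t₀ ((a ⬝ᵥ b) / (b ⬝ᵥ b)) with htdef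
  have ht0 : 0 < t := lt_min ht₀ (div_pos hpos hb)
  have ht1 : t ≤ t₀ := min_le_left _ _
  have hmem := hseg t ht0 ht1
  have hle := hmin _ hmem
  have hsq : (v - (p + t • b)) ⬝ᵥ (v - (p + t • b)) = a ⬝ᵥ a - 2 * t * (a ⬝ᵥ b) + t ^ 2 * (b ⬝ᵥ b) := by
    have hid : v - (p + t • b) = a - t • b := by simp [a]; ring_nf
    rw [hid]
    simp [sub_dotProduct, dotProduct_sub, dotProduct_smul, smul_dotProduct,
      dotProduct_comm b a, smul_eq_mul]
    ring
  have hdot : a ⬝ᵥ a ≤ (v - (p + t • b)) ⬝ᵥ (v - (p + t • b)) := by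
    rw [← en_sq, ← en_sq]
    exact pow_le_pow_left₀ (en_nonneg _) hle 2
  have hle2 : a ⬝ᵥ a ≤ a ⬝ᵥ a - 2 * t * (a ⬝ᵥ b) + t ^ 2 * (b ⬝ᵥ b) := hsq ▸ hdot
  have hkey : 2 * (a ⬝ᵥ b) ≤ t * (b ⬝ᵥ b) := by nlinarith
  rcases le_or_gt ((a ⬝ᵥ b) / (b ⬝ᵥ b)) t₀ with hc | hc
  · have heq : t = (a ⬝ᵥ b) / (b ⬝ᵥ b) := min_eq_right hc
    rw [heq, div_mul_cancel₀ _ (ne_of_gt hb)] at hkey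
    linarith
  · have heq : t = t₀ := min_eq_left (le_of_lt hc)
    have := (lt_div_iff₀ hb).1 hc
    rw [heq] at hkey
    linarith

end Stmt11Aux
namespace Stmt11Aux

open Matrix Set Pointwise

variable {k m n : ℕ}

lemma proj_transfer {S S₂ : Set (Fin k → ℝ)} {v p : Fin k → ℝ}
    (hconv : Convex ℝ S) (hp : p ∈ S)
    (hmin : ∀ s ∈ S, euclNorm (v - p) ≤ euclNorm (v - s))
    (H : ∀ w ∈ S₂, ∃ t : ℝ, 0 < t ∧ t ≤ 1 ∧ p + t • (w - p) ∈ S) :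
    ∀ w ∈ S₂, euclNorm (v - p) ≤ euclNorm (v - w) := by
  intro w hw
  obtain ⟨t, ht0, ht1, hq⟩ := H w hw
  set q := p + t • (w - p) with hqdef
  have hVIq : (v - p) ⬝ᵥ (q - p) ≤ 0 := by
    apply inner_nonpos_of_min hmin one_pos
    intro t' ht'0 ht'1
    have hid : p + t' • (q - p) = (1 - t') • p + t' • q := by
      rw [smul_sub, sub_smul, one_smul]; abel
    rw [hid]
    exact hconv hp hq (by linarith) (le_of_lt ht'0) (by ring)
  have hqp : q - p = t • (w - p) := by rw [hqdef]; abel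
  rw [hqp] at hVIq
  have hsm : (v - p) ⬝ᵥ (t • (w - p)) = t * ((v - p) ⬝ᵥ (w - p)) := by
    simp [dotProduct_smul, smul_eq_mul]
  rw [hsm] at hVIq
  have hfin : (v - p) ⬝ᵥ (w - p) ≤ 0 := by nlinarith
  exact norm_le_of_inner_nonpos hfin

lemma cont_mulVec (M : Matrix (Fin m) (Fin k) ℝ) : Continuous fun x : Fin k → ℝ => M *ᵥ x := by
  refine continuous_pi fun i => ?_
  simp only [Matrix.mulVec, dotProduct]
  exact continuous_finset_sum _ fun j _ => continuous_const.mul (continuous_apply j)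

lemma isClosed_box (ℓ u : Fin k → ℝ) : IsClosed (boxSet ℓ u) := by
  have : boxSet ℓ u = ⋂ i, ({x : Fin k → ℝ | ℓ i ≤ x i} ∩ {x | x i ≤ u i}) := by
    ext x; simp [boxSet, forall_and]
  rw [this]
  exact isClosed_iInter fun i =>
    (isClosed_le continuous_const (continuous_apply i)).inter
      (isClosed_le (continuous_apply i) continuous_const)

lemma convex_box (ℓ u : Fin k → ℝ) : Convex ℝ (boxSet ℓ u) := by
  intro x hx y hy a b ha hb hab
  intro i
  have h1 := (hx i).1; have h2 := (hx i).2; have h3 := (hy i).1; have h4 := (hy i).2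
  have e1 : a * ℓ i + b * ℓ i = ℓ i := by rw [← add_mul, hab, one_mul]
  have e2 : a * u i + b * u i = u i := by rw [← add_mul, hab, one_mul]
  constructor <;> simp only [Pi.add_apply, Pi.smul_apply, smul_eq_mul] <;>
    linarith [mul_le_mul_of_nonneg_left h1 ha, mul_le_mul_of_nonneg_left h2 ha,
      mul_le_mul_of_nonneg_left h3 hb, mul_le_mul_of_nonneg_left h4 hb]

lemma isClosed_eqset (M : Matrix (Fin m) (Fin k) ℝ) (b : Fin m → ℝ) :
    IsClosed {x : Fin k → ℝ | M *ᵥ x = b} :=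
  isClosed_singleton.preimage (cont_mulVec M)

lemma convex_eqset (M : Matrix (Fin m) (Fin k) ℝ) (b : Fin m → ℝ) :
    Convex ℝ {x : Fin k → ℝ | M *ᵥ x = b} := by
  intro x hx y hy a b' ha hb hab
  simp only [Set.mem_setOf_eq] at *
  rw [Matrix.mulVec_add, Matrix.mulVec_smul, Matrix.mulVec_smul, hx, hy, ← add_smul, hab, one_smul]

lemma isClosed_orth : IsClosed {x : Fin k → ℝ | ∀ i, 0 ≤ x i} := by
  have : {x : Fin k → ℝ | ∀ i, 0 ≤ x i} = ⋂ i, {x : Fin k → ℝ | 0 ≤ x i} := by ext; simp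
  rw [this]
  exact isClosed_iInter fun i => isClosed_le continuous_const (continuous_apply i)

lemma convex_inter' {S T : Set (Fin k → ℝ)} (hS : Convex ℝ S) (hT : Convex ℝ T) :
    Convex ℝ (S ∩ T) := hS.inter hT

lemma mv_diag (A : Matrix (Fin m) (Fin k) ℝ) (d x : Fin k → ℝ) :
    (A * Matrix.diagonal d) *ᵥ x = A *ᵥ (d * x) := by
  have hdg : Matrix.diagonal d *ᵥ x = d * x := by
    funext i
    rw [Matrix.mulVec_diagonal]
    rfl
  rw [← Matrix.mulVec_mulVec, hdg]

lemma mvT_diag (A : Matrix (Fin m) (Fin k) ℝ) (d : Fin k → ℝ) (y : Fin m → ℝ) :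
    (A * Matrix.diagonal d)ᵀ *ᵥ y = d * (Aᵀ *ᵥ y) := by
  have hdg : ∀ z : Fin k → ℝ, Matrix.diagonal d *ᵥ z = d * z := by
    intro z
    funext i
    rw [Matrix.mulVec_diagonal]
    rfl
  rw [Matrix.transpose_mul, Matrix.diagonal_transpose, ← Matrix.mulVec_mulVec, hdg]

end Stmt11Aux
namespace Stmt11Aux

open Matrix Set

lemma signVec_one {n : ℕ} : IsSignVector (fun _ : Fin n => (1 : ℝ)) := fun _ => Or.inl rfl

lemma signSet_finite {n : ℕ} : {d : Fin n → ℝ | IsSignVector d}.Finite := by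
  apply Set.Finite.subset (Set.Finite.pi (t := fun _ : Fin n => ({1, -1} : Set ℝ))
    (fun _ => (Set.finite_singleton (-1 : ℝ)).insert 1))
  intro d hd
  intro i _
  rcases hd i with h | h <;> simp [h]

lemma main_combine {n : ℕ} (Sbox : Set ℝ) (Sd : (Fin n → ℝ) → Set ℝ)
    (hnn : ∀ r ∈ Sbox, 0 ≤ r)
    (hsub : ∀ d, IsSignVector d → Sd d ⊆ Sbox)
    (hdom : ∀ r ∈ Sbox, ∃ d, IsSignVector d ∧ ∃ r' ∈ Sd d, r ≤ r')
    (hbdd : ∀ d, IsSignVector d → ∃ B, ∀ r ∈ Sd d, r ≤ B) :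
    sSup Sbox = sSup {r | ∃ d, IsSignVector d ∧ r = sSup (Sd d)} := by
  set SV := {d : Fin n → ℝ | IsSignVector d} with hSVdef
  have hSV : SV.Finite := signSet_finite
  haveI : Finite SV := hSV.to_subtype
  have hch : ∀ d : SV, ∃ B, ∀ r ∈ Sd d, r ≤ B := fun ⟨d, hd⟩ => hbdd d hd
  choose B hB using hch
  obtain ⟨C, hC⟩ := (Set.finite_range B).bddAbove
  have hCd : ∀ d (hd : IsSignVector d), ∀ r ∈ Sd d, r ≤ C := fun d hd r hr =>
    le_trans (hB ⟨d, hd⟩ r hr) (hC (Set.mem_range_self _))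
  have hbdSd : ∀ d (hd : IsSignVector d), BddAbove (Sd d) := fun d hd => ⟨C, fun r hr => hCd d hd r hr⟩
  have hbdSbox : BddAbove Sbox := by
    refine ⟨C, fun ρ hρ => ?_⟩
    obtain ⟨d, hd, r', hr', hle⟩ := hdom ρ hρ
    exact le_trans hle (hCd d hd r' hr')
  have hTim : {r | ∃ d, IsSignVector d ∧ r = sSup (Sd d)} = (fun d => sSup (Sd d)) '' SV := by
    ext r; constructor
    · rintro ⟨d, hd, rfl⟩; exact ⟨d, hd, rfl⟩
    · rintro ⟨d, hd, rfl⟩; exact ⟨d, hd, rfl⟩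
  have hTbd : BddAbove {r | ∃ d, IsSignVector d ∧ r = sSup (Sd d)} := by
    rw [hTim]; exact (hSV.image _).bddAbove
  have hTne : {r | ∃ d, IsSignVector d ∧ r = sSup (Sd d)}.Nonempty :=
    ⟨_, fun _ : Fin n => (1 : ℝ), signVec_one, rfl⟩
  rcases Sbox.eq_empty_or_nonempty with hemp | hne
  · have hall : ∀ d, IsSignVector d → Sd d = ∅ := fun d hd =>
      Set.eq_empty_of_subset_empty (hemp ▸ hsub d hd)
    have : {r | ∃ d, IsSignVector d ∧ r = sSup (Sd d)} = {0} := by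
      ext r; constructor
      · rintro ⟨d, hd, rfl⟩
        simp [hall d hd, Real.sSup_empty]
      · rintro rfl
        exact ⟨_, signVec_one, by simp [hall _ signVec_one, Real.sSup_empty]⟩
    rw [hemp, this, Real.sSup_empty, csSup_singleton]
  · apply le_antisymm
    · apply csSup_le hne
      intro ρ hρ
      obtain ⟨d, hd, r', hr', hle⟩ := hdom ρ hρ
      calc ρ ≤ r' := hle
        _ ≤ sSup (Sd d) := le_csSup (hbdSd d hd) hr'
        _ ≤ _ := le_csSup hTbd ⟨d, hd, rfl⟩
    · apply csSup_le hTne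
      rintro r ⟨d, hd, rfl⟩
      rcases (Sd d).eq_empty_or_nonempty with hdemp | hdne
      · rw [hdemp, Real.sSup_empty]
        obtain ⟨ρ₀, hρ₀⟩ := hne
        exact le_trans (hnn ρ₀ hρ₀) (le_csSup hbdSbox hρ₀)
      · exact csSup_le_csSup hbdSbox hdne (hsub d hd)

end Stmt11Aux
namespace Stmt11Aux

open Matrix Set

variable {k n : ℕ}

lemma exists_uniform_t (C : Fin n → ℝ → Prop)
    (h : ∀ i, ∃ ti : ℝ, 0 < ti ∧ ∀ t : ℝ, 0 < t → t ≤ ti → C i t) :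
    ∃ t : ℝ, 0 < t ∧ t ≤ 1 ∧ ∀ i, C i t := by
  choose ti hti0 hti using h
  by_cases hn : (Finset.univ : Finset (Fin n)).Nonempty
  · set t := min 1 (Finset.univ.inf' hn ti) with ht
    have ht0 : 0 < t := by
      apply lt_min one_pos
      rw [Finset.lt_inf'_iff]
      exact fun i _ => hti0 i
    refine ⟨t, ht0, min_le_left _ _, fun i => ?_⟩
    exact hti i t ht0 (le_trans (min_le_right _ _) (Finset.inf'_le _ (Finset.mem_univ i)))
  · exact ⟨1, one_pos, le_rfl, fun i => absurd ⟨i, Finset.mem_univ i⟩ hn⟩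

lemma seg_into_box {ℓ u : Fin n → ℝ} (hlu : ∀ i, ℓ i < u i) {p q : Fin n → ℝ}
    (hp : ∀ i, ℓ i ≤ p i ∧ p i ≤ u i)
    (h1 : ∀ i, p i = ℓ i → ℓ i ≤ q i)
    (h2 : ∀ i, p i = u i → q i ≤ u i) :
    ∃ t : ℝ, 0 < t ∧ t ≤ 1 ∧
      ∀ i, ℓ i ≤ p i + t * (q i - p i) ∧ p i + t * (q i - p i) ≤ u i := by
  apply exists_uniform_t
  intro i
  rcases lt_trichotomy (q i - p i) 0 with hq | hq | hq
  · -- moving down; need p i > ℓ i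
    have hpl : ℓ i < p i := by
      rcases lt_or_eq_of_le (hp i).1 with h | h
      · exact h
      · exfalso
        have := h1 i h.symm
        nlinarith
    refine ⟨(p i - ℓ i) / (-(q i - p i)), div_pos (by linarith) (by linarith), ?_⟩
    intro t ht0 hti
    constructor
    · have h3 : t * (-(q i - p i)) ≤ p i - ℓ i := by
        calc t * (-(q i - p i)) ≤ ((p i - ℓ i) / (-(q i - p i))) * (-(q i - p i)) := by
              apply mul_le_mul_of_nonneg_right hti (by linarith)
          _ = p i - ℓ i := div_mul_cancel₀ _ (by linarith)
      nlinarith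
    · nlinarith [(hp i).2]
  · exact ⟨1, one_pos, fun t _ _ => by rw [hq, mul_zero, add_zero]; exact hp i⟩
  · -- moving up; need p i < u i
    have hpu : p i < u i := by
      rcases lt_or_eq_of_le (hp i).2 with h | h
      · exact h
      · exfalso
        have := h2 i h
        nlinarith
    refine ⟨(u i - p i) / (q i - p i), div_pos (by linarith) hq, ?_⟩
    intro t ht0 hti
    constructor
    · nlinarith [(hp i).1]
    · have h3 : t * (q i - p i) ≤ u i - p i := by
        calc t * (q i - p i) ≤ ((u i - p i) / (q i - p i)) * (q i - p i) :=
              mul_le_mul_of_nonneg_right hti (by linarith)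
          _ = u i - p i := div_mul_cancel₀ _ (by linarith)
      linarith
  -- end

lemma distWith_upperset (w a : Fin k → ℝ) :
    distWith euclNorm a {c | ∀ i, w i ≤ c i} =
      euclNorm (fun i => max (w i - a i) 0) := by
  set p : Fin k → ℝ := fun i => max (a i) (w i) with hp
  have hpmem : p ∈ {c : Fin k → ℝ | ∀ i, w i ≤ c i} := fun i => le_max_right _ _
  have hnorm : euclNorm (a - p) = euclNorm (fun i => max (w i - a i) 0) := by
    rw [euclNorm, euclNorm]
    congr 1
    apply Finset.sum_congr rfl
    intro i _
    rcases le_total (w i) (a i) with h | h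
    · simp [Pi.sub_apply, hp, max_eq_left h, max_eq_right (by linarith : w i - a i ≤ 0)]
    · rw [Pi.sub_apply, hp]
      simp only []
      rw [max_eq_right h, max_eq_left (by linarith : (0:ℝ) ≤ w i - a i)]
      ring
  rw [← hnorm]
  apply distWith_eq_of_min hpmem
  intro s hs
  apply en_le_of_dot_le
  apply Finset.sum_le_sum
  intro i _
  simp only [Pi.sub_apply]
  rcases le_total (w i) (a i) with h | h
  · rw [hp]; simp only [max_eq_left h]
    simp [mul_self_nonneg]
  · rw [hp]; simp only [max_eq_right h]
    have h1 : w i ≤ s i := hs i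
    nlinarith

lemma distWith_bandset (lo hi a : Fin k → ℝ) (h : ∀ i, lo i ≤ hi i) :
    distWith euclNorm a {c | ∀ i, lo i ≤ c i ∧ c i ≤ hi i} =
      euclNorm (fun i => max (lo i - a i) 0 + max (a i - hi i) 0) := by
  set p : Fin k → ℝ := fun i => max (lo i) (min (a i) (hi i)) with hp
  have hcases : ∀ i, (a i < lo i ∧ p i = lo i) ∨ (lo i ≤ a i ∧ a i ≤ hi i ∧ p i = a i) ∨
      (hi i < a i ∧ p i = hi i) := by
    intro i
    rcases lt_or_ge (a i) (lo i) with h1 | h1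
    · exact Or.inl ⟨h1, by rw [hp]; simp only []; rw [min_eq_left (by linarith [h i]), max_eq_left (le_of_lt h1)]⟩
    · rcases le_or_gt (a i) (hi i) with h2 | h2
      · exact Or.inr (Or.inl ⟨h1, h2, by rw [hp]; simp only []; rw [min_eq_left h2, max_eq_right h1]⟩)
      · exact Or.inr (Or.inr ⟨h2, by rw [hp]; simp only []; rw [min_eq_right (le_of_lt h2), max_eq_right (h i)]⟩)
  have hpmem : p ∈ {c : Fin k → ℝ | ∀ i, lo i ≤ c i ∧ c i ≤ hi i} := by
    intro i
    rcases hcases i with ⟨h1, h2⟩ | ⟨h1, h2, h3⟩ | ⟨h1, h2⟩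
    · rw [h2]; exact ⟨le_rfl, h i⟩
    · rw [h3]; exact ⟨h1, h2⟩
    · rw [h2]; exact ⟨h i, le_rfl⟩
  have hsq : ∀ i, (a i - p i) ^ 2 = (max (lo i - a i) 0 + max (a i - hi i) 0) ^ 2 := by
    intro i
    rcases hcases i with ⟨h1, h2⟩ | ⟨h1, h2, h3⟩ | ⟨h1, h2⟩
    · rw [h2, max_eq_left (by linarith), max_eq_right (by linarith [h i])]
      ring
    · rw [h3, max_eq_right (by linarith), max_eq_right (by linarith)]
      ring
    · rw [h2, max_eq_right (by linarith [h i]), max_eq_left (by linarith)]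
      ring
  have hnorm : euclNorm (a - p) = euclNorm (fun i => max (lo i - a i) 0 + max (a i - hi i) 0) := by
    rw [euclNorm, euclNorm]
    congr 1
    exact Finset.sum_congr rfl fun i _ => hsq i
  rw [← hnorm]
  apply distWith_eq_of_min hpmem
  intro s hs
  apply en_le_of_dot_le
  apply Finset.sum_le_sum
  intro i _
  simp only [Pi.sub_apply]
  have hs1 := (hs i).1
  have hs2 := (hs i).2
  rcases hcases i with ⟨h1, h2⟩ | ⟨h1, h2, h3⟩ | ⟨h1, h2⟩
  · rw [h2]; nlinarith
  · rw [h3]; nlinarith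
  · rw [h2]; nlinarith

end Stmt11Aux
namespace Stmt11Aux

open Matrix Set

variable {m n : ℕ}

/-- The ratio set whose sup is the Hoffman constant. -/
def ratioSet {p q : ℕ} (Φ : (Fin p → ℝ) → Set (Fin q → ℝ)) : Set ℝ :=
  {r | ∃ u v, u ∈ domOf Φ ∧ v ∈ imOf Φ ∧ v ∉ Φ u ∧
    r = distWith euclNorm v (Φ u) / distWith euclNorm u (invOf Φ v)}

lemma hoffman_eq_sSup_ratioSet {p q : ℕ} (Φ : (Fin p → ℝ) → Set (Fin q → ℝ)) :
    hoffmanConst euclNorm euclNorm Φ = sSup (ratioSet Φ) := rfl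

lemma ratioSet_nonneg {p q : ℕ} (Φ : (Fin p → ℝ) → Set (Fin q → ℝ)) :
    ∀ r ∈ ratioSet Φ, 0 ≤ r := by
  rintro r ⟨u, v, _, _, _, rfl⟩
  exact div_nonneg (distWith_nonneg _ _) (distWith_nonneg _ _)

lemma mem_solMapBox {A : Matrix (Fin m) (Fin n) ℝ} {ℓ u b : _} {x : Fin n → ℝ} :
    x ∈ solMap A (boxSet ℓ u) ({0} : Set (Fin m → ℝ)) b ↔ (x ∈ boxSet ℓ u ∧ A *ᵥ x = b) := by
  simp [solMap, sub_eq_zero]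

lemma imOf_solMapBox {A : Matrix (Fin m) (Fin n) ℝ} {ℓ u : Fin n → ℝ} :
    imOf (solMap A (boxSet ℓ u) ({0} : Set (Fin m → ℝ))) = boxSet ℓ u := by
  ext x
  simp only [imOf, Set.mem_iUnion]
  constructor
  · rintro ⟨b, hb⟩
    exact (mem_solMapBox.1 hb).1
  · intro hx
    exact ⟨A *ᵥ x, mem_solMapBox.2 ⟨hx, rfl⟩⟩

lemma invOf_solMapBox {A : Matrix (Fin m) (Fin n) ℝ} {ℓ u : Fin n → ℝ} {x : Fin n → ℝ}
    (hx : x ∈ boxSet ℓ u) :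
    invOf (solMap A (boxSet ℓ u) ({0} : Set (Fin m → ℝ))) x = {A *ᵥ x} := by
  ext b
  simp only [invOf, Set.mem_setOf_eq, mem_solMapBox, Set.mem_singleton_iff]
  constructor
  · rintro ⟨_, h⟩; exact h.symm
  · rintro rfl; exact ⟨hx, rfl⟩

lemma imOf_PA {M : Matrix (Fin m) (Fin n) ℝ} :
    imOf (PA M) = {x : Fin n → ℝ | ∀ i, 0 ≤ x i} := by
  ext x
  simp only [imOf, Set.mem_iUnion, PA, Set.mem_setOf_eq]
  constructor
  · rintro ⟨b, h, _⟩; exact h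
  · intro h; exact ⟨M *ᵥ x, h, rfl⟩

lemma invOf_PA {M : Matrix (Fin m) (Fin n) ℝ} {x : Fin n → ℝ} (hx : ∀ i, 0 ≤ x i) :
    invOf (PA M) x = {M *ᵥ x} := by
  ext b
  simp only [invOf, PA, Set.mem_setOf_eq, Set.mem_singleton_iff]
  constructor
  · rintro ⟨_, h⟩; exact h.symm
  · rintro rfl; exact ⟨hx, rfl⟩

lemma isClosed_PA (M : Matrix (Fin m) (Fin n) ℝ) (b : Fin m → ℝ) : IsClosed (PA M b) := by
  have : PA M b = {x : Fin n → ℝ | ∀ i, 0 ≤ x i} ∩ {x | M *ᵥ x = b} := rfl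
  rw [this]
  exact isClosed_orth.inter (isClosed_eqset M b)

lemma convex_PA (M : Matrix (Fin m) (Fin n) ℝ) (b : Fin m → ℝ) : Convex ℝ (PA M b) := by
  have : PA M b = {x : Fin n → ℝ | ∀ i, 0 ≤ x i} ∩ {x | M *ᵥ x = b} := rfl
  rw [this]
  refine Convex.inter ?_ (convex_eqset M b)
  intro x hx y hy a b' ha hb hab i
  have := hx i; have := hy i
  simp only [Pi.add_apply, Pi.smul_apply, smul_eq_mul]
  positivity

lemma part1_hsub (A : Matrix (Fin m) (Fin n) ℝ) (ℓ u : Fin n → ℝ) (hlu : ∀ i, ℓ i < u i)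
    {d : Fin n → ℝ} (hd : IsSignVector d) :
    ratioSet (PA (A * Matrix.diagonal d)) ⊆
      ratioSet (solMap A (boxSet ℓ u) ({0} : Set (Fin m → ℝ))) := by
  classical
  intro r hr
  obtain ⟨u', v', hdom', him', hnot, rfl⟩ := hr
  set M := A * Matrix.diagonal d with hM
  have hv' : ∀ i, 0 ≤ v' i := by rw [imOf_PA] at him'; exact him'
  set K' : Set (Fin n → ℝ) := PA M u' with hK'
  have hK'ne : K'.Nonempty := hdom'
  obtain ⟨s', hs'K, hs'min⟩ := exists_min hK'ne (isClosed_PA M u') v'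
  set ν := euclNorm (v' - s') with hν
  have hνd : distWith euclNorm v' K' = ν := distWith_eq_of_min hs'K hs'min
  have hν0 : 0 < ν := by
    apply en_pos_of_ne
    intro h0
    rw [sub_eq_zero] at h0
    exact hnot (h0 ▸ hs'K)
  have hs'0 : ∀ i, 0 ≤ s' i := hs'K.1
  set δ := euclNorm (u' - M *ᵥ v') with hδ
  have hδd : distWith euclNorm u' (invOf (PA M) v') = δ := by
    rw [invOf_PA hv', distWith_singleton]
  -- choose t
  obtain ⟨t, ht0, ht1, htc⟩ := exists_uniform_t
      (fun i t => t * v' i ≤ u i - ℓ i ∧ t * s' i ≤ u i - ℓ i) (by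
    intro i
    refine ⟨(u i - ℓ i) / (1 + v' i + s' i), div_pos (by linarith [hlu i]) (by linarith [hv' i, hs'0 i]), ?_⟩
    intro t ht0' hti
    have hD : (0:ℝ) < 1 + v' i + s' i := by linarith [hv' i, hs'0 i]
    have h1 : ((u i - ℓ i) / (1 + v' i + s' i)) * (1 + v' i + s' i) = u i - ℓ i :=
      div_mul_cancel₀ _ (ne_of_gt hD)
    constructor
    · calc t * v' i ≤ ((u i - ℓ i) / (1 + v' i + s' i)) * v' i :=
            mul_le_mul_of_nonneg_right hti (hv' i)
        _ ≤ ((u i - ℓ i) / (1 + v' i + s' i)) * (1 + v' i + s' i) := by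
            apply mul_le_mul_of_nonneg_left (by linarith [hs'0 i]) (le_of_lt (div_pos (by linarith [hlu i]) hD))
        _ = u i - ℓ i := h1
    · calc t * s' i ≤ ((u i - ℓ i) / (1 + v' i + s' i)) * s' i :=
            mul_le_mul_of_nonneg_right hti (hs'0 i)
        _ ≤ ((u i - ℓ i) / (1 + v' i + s' i)) * (1 + v' i + s' i) := by
            apply mul_le_mul_of_nonneg_left (by linarith [hv' i]) (le_of_lt (div_pos (by linarith [hlu i]) hD))
        _ = u i - ℓ i := h1)
  -- corner
  set c : Fin n → ℝ := fun i => if d i = 1 then ℓ i else u i with hc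
  have hdne : ∀ i, d i = -1 → ¬ (d i = 1) := by intro i h h1; rw [h1] at h; norm_num at h
  have hmemb : ∀ s : Fin n → ℝ, (∀ i, 0 ≤ s i) → (∀ i, t * s i ≤ u i - ℓ i) →
      (c + t • (d * s)) ∈ boxSet ℓ u := by
    intro s hs hsT i
    simp only [Pi.add_apply, Pi.smul_apply, Pi.mul_apply, smul_eq_mul, hc]
    rcases hd i with hdi | hdi
    · rw [if_pos hdi, hdi, one_mul]
      have := mul_nonneg (le_of_lt ht0) (hs i)
      exact ⟨by linarith, by linarith [hsT i]⟩
    · rw [if_neg (hdne i hdi), hdi]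
      have := mul_nonneg (le_of_lt ht0) (hs i)
      have h2 := hsT i
      constructor <;> nlinarith
  set φ : (Fin n → ℝ) → (Fin n → ℝ) := fun s => c + t • (d * s) with hφ
  set T : Set (Fin n → ℝ) := {s | ∀ i, t * s i ≤ u i - ℓ i} with hT
  have hAφ : ∀ s, A *ᵥ (φ s) = A *ᵥ c + t • (M *ᵥ s) := by
    intro s
    rw [hφ]
    simp only []
    rw [Matrix.mulVec_add, Matrix.mulVec_smul, hM, mv_diag]
  have himg : solMap A (boxSet ℓ u) ({0} : Set (Fin m → ℝ)) (A *ᵥ c + t • u') = φ '' (K' ∩ T) := by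
    ext x
    rw [mem_solMapBox]
    constructor
    · rintro ⟨hxb, hxe⟩
      set s : Fin n → ℝ := fun i => t⁻¹ * (d i * (x i - c i)) with hsdef
      have hds : d * s = t⁻¹ • (x - c) := by
        funext i
        simp only [Pi.mul_apply, hsdef, Pi.smul_apply, Pi.sub_apply, smul_eq_mul]
        rcases hd i with hdi | hdi <;> rw [hdi] <;> ring
      have hφs : φ s = x := by
        rw [hφ]
        simp only []
        rw [hds, smul_smul, mul_inv_cancel₀ (ne_of_gt ht0), one_smul]
        funext i
        simp
      have hts : ∀ i, t * s i = d i * (x i - c i) := by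
        intro i
        rw [hsdef]
        simp only []
        field_simp
      have hsbd : ∀ i, 0 ≤ d i * (x i - c i) ∧ d i * (x i - c i) ≤ u i - ℓ i := by
        intro i
        have hb1 := (hxb i).1
        have hb2 := (hxb i).2
        rcases hd i with hdi | hdi
        · rw [hdi, one_mul, hc]
          simp only [if_pos hdi]
          exact ⟨by linarith, by linarith⟩
        · rw [hdi, hc]
          simp only [if_neg (hdne i hdi)]
          constructor <;> nlinarith
      refine ⟨s, ⟨⟨fun i => ?_, ?_⟩, fun i => ?_⟩, hφs⟩
      · have := (hsbd i).1
        have h3 := hts i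
        nlinarith
      · -- M *ᵥ s = u'
        rw [hM, mv_diag, hds]
        rw [Matrix.mulVec_smul, Matrix.mulVec_sub]
        rw [hxe]
        funext j
        simp only [Pi.smul_apply, Pi.sub_apply, Pi.add_apply, smul_eq_mul]
        field_simp
        ring
      · rw [hts i]
        exact (hsbd i).2
    · rintro ⟨s, ⟨⟨hs0, hse⟩, hsT⟩, rfl⟩
      refine ⟨hmemb s hs0 hsT, ?_⟩
      rw [hAφ s, hse]
  have hφiso : ∀ s ∈ K' ∩ T, euclNorm (φ v' - φ s) = t * euclNorm (v' - s) := by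
    intro s _
    have hid : φ v' - φ s = t • (d * (v' - s)) := by
      funext i
      simp only [hφ, Pi.add_apply, Pi.smul_apply, Pi.mul_apply, Pi.sub_apply, smul_eq_mul]
      ring
    rw [hid, en_smul, en_mul_sign hd, abs_of_pos ht0]
  have hnum : distWith euclNorm (φ v') (φ '' (K' ∩ T)) = t * distWith euclNorm v' (K' ∩ T) :=
    distWith_image (le_of_lt ht0) hφiso
  have hs'T : s' ∈ T := fun i => (htc i).2
  have hKT : distWith euclNorm v' (K' ∩ T) = ν := by
    apply le_antisymm (distWith_le (S := K' ∩ T) ⟨hs'K, hs'T⟩)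
    exact le_distWith (S := K' ∩ T) ⟨s', hs'K, hs'T⟩ fun s hs => hs'min s hs.1
  have hv'box : φ v' ∈ boxSet ℓ u := hmemb v' hv' fun i => (htc i).1
  have hdom2 : (A *ᵥ c + t • u') ∈ domOf (solMap A (boxSet ℓ u) ({0} : Set (Fin m → ℝ))) := by
    refine ⟨φ s', ?_⟩
    rw [himg]
    exact ⟨s', ⟨hs'K, hs'T⟩, rfl⟩
  have him2 : φ v' ∈ imOf (solMap A (boxSet ℓ u) ({0} : Set (Fin m → ℝ))) := by
    rw [imOf_solMapBox]
    exact hv'box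
  have hnot2 : φ v' ∉ solMap A (boxSet ℓ u) ({0} : Set (Fin m → ℝ)) (A *ᵥ c + t • u') := by
    intro hmem
    have h0 := distWith_zero_of_mem hmem
    rw [himg, hnum, hKT] at h0
    nlinarith
  have hval : distWith euclNorm v' (PA M u') / distWith euclNorm u' (invOf (PA M) v') =
      distWith euclNorm (φ v') (solMap A (boxSet ℓ u) ({0} : Set (Fin m → ℝ)) (A *ᵥ c + t • u')) /
        distWith euclNorm (A *ᵥ c + t • u')
          (invOf (solMap A (boxSet ℓ u) ({0} : Set (Fin m → ℝ))) (φ v')) := by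
    rw [himg, hnum, hKT, invOf_solMapBox hv'box, distWith_singleton]
    have hden : A *ᵥ c + t • u' - A *ᵥ (φ v') = t • (u' - M *ᵥ v') := by
      rw [hAφ v', smul_sub]
      abel
    rw [hden, en_smul, abs_of_pos ht0, hνd, hδd, hδ]
    rw [mul_div_mul_left _ _ (ne_of_gt ht0)]
  exact ⟨A *ᵥ c + t • u', φ v', hdom2, him2, hnot2, hval⟩

end Stmt11Aux
namespace Stmt11Aux

open Matrix Set

variable {m n : ℕ}

lemma part1_hdom (A : Matrix (Fin m) (Fin n) ℝ) (ℓ u : Fin n → ℝ) (hlu : ∀ i, ℓ i < u i) :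
    ∀ r ∈ ratioSet (solMap A (boxSet ℓ u) ({0} : Set (Fin m → ℝ))),
      ∃ d, IsSignVector d ∧ r ∈ ratioSet (PA (A * Matrix.diagonal d)) := by
  classical
  rintro r ⟨b, v, hdomb, himv, hnot, rfl⟩
  have hvbox : v ∈ boxSet ℓ u := by rwa [imOf_solMapBox] at himv
  set K : Set (Fin n → ℝ) := solMap A (boxSet ℓ u) ({0} : Set (Fin m → ℝ)) b with hK
  have hKdesc : K = {x | x ∈ boxSet ℓ u ∧ A *ᵥ x = b} := by
    ext x; exact mem_solMapBox
  have hKne : K.Nonempty := hdomb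
  have hKcl : IsClosed K := by
    rw [hKdesc]
    exact (isClosed_box ℓ u).inter (isClosed_eqset A b)
  have hKcv : Convex ℝ K := by
    rw [hKdesc]
    exact (convex_box ℓ u).inter (convex_eqset A b)
  obtain ⟨p, hpK, hpmin⟩ := exists_min hKne hKcl v
  have hpbox : p ∈ boxSet ℓ u := (hKdesc ▸ hpK).1
  have hpe : A *ᵥ p = b := (hKdesc ▸ hpK).2
  set ν := euclNorm (v - p) with hν
  have hν0 : 0 < ν := by
    apply en_pos_of_ne
    intro h0
    rw [sub_eq_zero] at h0
    exact hnot (h0 ▸ hpK)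
  set d : Fin n → ℝ := fun i => if p i - ℓ i ≤ u i - p i then 1 else -1 with hddef
  have hd : IsSignVector d := by
    intro i
    rw [hddef]
    by_cases h : p i - ℓ i ≤ u i - p i
    · left; simp only []; rw [if_pos h]
    · right; simp only []; rw [if_neg h]
  set c : Fin n → ℝ := fun i => if d i = 1 then ℓ i else u i with hc
  have hdne : ∀ i, d i = -1 → ¬ (d i = 1) := by
    intro i h h1; rw [h1] at h; norm_num at h
  have hcl' : ∀ i, d i = 1 → c i = ℓ i := by intro i h; rw [hc]; simp [h]
  have hcu' : ∀ i, d i = -1 → c i = u i := by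
    intro i h; rw [hc]; simp [if_neg (hdne i h)]
  have hdl : ∀ i, p i = ℓ i → d i = 1 := by
    intro i h
    rw [hddef]
    simp only []
    rw [if_pos (by rw [h]; linarith [hlu i, (hpbox i).2])]
  have hdu : ∀ i, p i = u i → d i = -1 := by
    intro i h
    rw [hddef]
    simp only []
    rw [if_neg (by rw [h]; intro hcon; linarith [hlu i])]
  have hrel : ∀ x, x ∈ boxSet ℓ u → ∀ i, 0 ≤ d i * (x i - c i) := by
    intro x hx i
    rcases hd i with hdi | hdi
    · rw [hdi, one_mul, hcl' i hdi]
      linarith [(hx i).1]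
    · rw [hdi, hcu' i hdi]
      nlinarith [(hx i).2]
  set M := A * Matrix.diagonal d with hM
  set s0 : Fin n → ℝ := d * (p - c) with hs0
  set v' : Fin n → ℝ := d * (v - c) with hv'
  set u'' : Fin m → ℝ := b - A *ᵥ c with hu''
  have hps : p = c + d * s0 := by
    rw [hs0, sign_mul_cancel hd]
    funext i; simp
  have hvs : v = c + d * v' := by
    rw [hv', sign_mul_cancel hd]
    funext i; simp
  have hs0K : s0 ∈ PA M u'' := by
    constructor
    · intro i
      exact hrel p hpbox i
    · rw [hM, mv_diag, hs0, sign_mul_cancel hd, Matrix.mulVec_sub, hpe, hu'']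
  set φ : (Fin n → ℝ) → (Fin n → ℝ) := fun s => c + d * s with hφ
  have hφiso : ∀ s ∈ PA M u'', euclNorm (v - φ s) = 1 * euclNorm (v' - s) := by
    intro s _
    have hid : v - φ s = d * (v' - s) := by
      rw [hφ]
      simp only []
      rw [mul_sub, hv', sign_mul_cancel hd]
      funext i; simp; ring
    rw [hid, en_mul_sign hd, one_mul]
  have hAφ : ∀ s, A *ᵥ (φ s) = A *ᵥ c + M *ᵥ s := by
    intro s
    rw [hφ]
    simp only []
    rw [Matrix.mulVec_add, hM, mv_diag]
  have hminR : ∀ w ∈ φ '' (PA M u''), euclNorm (v - p) ≤ euclNorm (v - w) := by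
    apply proj_transfer hKcv hpK hpmin
    rintro w ⟨s, hsK, rfl⟩
    have h1 : ∀ i, p i = ℓ i → ℓ i ≤ (φ s) i := by
      intro i h
      have hdi := hdl i h
      have : (φ s) i = ℓ i + s i := by
        rw [hφ]; simp only [Pi.add_apply, Pi.mul_apply]
        rw [hcl' i hdi, hdi, one_mul]
      rw [this]
      linarith [hsK.1 i]
    have h2 : ∀ i, p i = u i → (φ s) i ≤ u i := by
      intro i h
      have hdi := hdu i h
      have : (φ s) i = u i - s i := by
        rw [hφ]; simp only [Pi.add_apply, Pi.mul_apply]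
        rw [hcu' i hdi, hdi]
        ring
      rw [this]
      linarith [hsK.1 i]
    obtain ⟨t, ht0, ht1, htc⟩ := seg_into_box hlu (fun i => hpbox i) h1 h2
    refine ⟨t, ht0, ht1, ?_⟩
    rw [hK, mem_solMapBox]
    constructor
    · intro i
      have := htc i
      simpa [Pi.add_apply, Pi.smul_apply, Pi.sub_apply, smul_eq_mul] using this
    · rw [Matrix.mulVec_add, Matrix.mulVec_smul, Matrix.mulVec_sub, hAφ s, hsK.2, hpe, hu'']
      funext j
      simp only [Pi.add_apply, Pi.smul_apply, Pi.sub_apply, smul_eq_mul]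
      ring
  have hpim : p ∈ φ '' (PA M u'') := ⟨s0, hs0K, hps.symm⟩
  have hdist2 : distWith euclNorm v (φ '' (PA M u'')) = ν :=
    distWith_eq_of_min hpim hminR
  have hdistv' : distWith euclNorm v' (PA M u'') = ν := by
    have := distWith_image (S := PA M u'') (φ := φ) (x := v') (x' := v) (t := 1)
      zero_le_one hφiso
    rw [one_mul] at this
    rw [← this, hdist2]
  have hv'0 : ∀ i, 0 ≤ v' i := hrel v hvbox
  have hnot'' : v' ∉ PA M u'' := by
    intro hmem
    have h0 := distWith_zero_of_mem hmem
    rw [hdistv'] at h0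
    exact absurd h0 (ne_of_gt hν0)
  have hden : u'' - M *ᵥ v' = b - A *ᵥ v := by
    rw [hM, mv_diag, hv', sign_mul_cancel hd, Matrix.mulVec_sub, hu'']
    abel
  have hval : distWith euclNorm v K / distWith euclNorm b (invOf (solMap A (boxSet ℓ u) ({0} : Set (Fin m → ℝ))) v) =
      distWith euclNorm v' (PA M u'') /
        distWith euclNorm u'' (invOf (PA M) v') := by
    rw [distWith_eq_of_min hpK hpmin, invOf_solMapBox hvbox, distWith_singleton,
      hdistv', invOf_PA hv'0, distWith_singleton, hden]
  exact ⟨d, hd, u'', v', ⟨s0, hs0K⟩, by rw [imOf_PA]; exact hv'0, hnot'', hval⟩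

end Stmt11Aux
namespace Stmt11Aux

open Matrix Set

variable {m n : ℕ}

lemma dot_continuous (z : Fin n → ℝ) : Continuous fun h : Fin n → ℝ => h ⬝ᵥ z := by
  simp only [dotProduct]
  exact continuous_finset_sum _ fun i _ => (continuous_apply i).mul continuous_const

lemma part1_hbdd (A : Matrix (Fin m) (Fin n) ℝ) {d : Fin n → ℝ} (hd : IsSignVector d) :
    ∃ B, ∀ r ∈ ratioSet (PA (A * Matrix.diagonal d)), r ≤ B := by
  classical
  set M := A * Matrix.diagonal d with hM
  set Z : Finset (Fin n) → Set (Fin n → ℝ) := fun J =>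
    {h | euclNorm h = 1 ∧ (∀ i ∈ J, 0 ≤ h i) ∧
      ∀ z : Fin n → ℝ, M *ᵥ z = 0 → (∀ i ∈ J, 0 ≤ z i) → h ⬝ᵥ z ≤ 0} with hZ
  set F : (Fin n → ℝ) → ℝ := fun h => euclNorm (M *ᵥ h) with hF
  set mJ : Finset (Fin n) → ℝ := fun J => sInf (F '' Z J) with hmJ
  have hFcont : Continuous F := continuous_en.comp (cont_mulVec M)
  have hFnn : ∀ h, 0 ≤ F h := fun h => en_nonneg _
  have hbdbelow : ∀ J, BddBelow (F '' Z J) := by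
    intro J
    exact ⟨0, by rintro r ⟨h', _, rfl⟩; exact hFnn h'⟩
  have hmJnn : ∀ J, 0 ≤ mJ J := by
    intro J
    rcases (Z J).eq_empty_or_nonempty with h | h
    · rw [hmJ]; simp only [h, Set.image_empty]; rw [Real.sInf_empty]
    · exact Real.sInf_nonneg (by rintro r ⟨h', _, rfl⟩; exact hFnn h')
  have hbJnn : ∀ J : Finset (Fin n), 0 ≤ (mJ J)⁻¹ := fun J => inv_nonneg.2 (hmJnn J)
  refine ⟨∑ J : Finset (Fin n), (mJ J)⁻¹, ?_⟩
  rintro r ⟨u', v', hdom', him', hnot, rfl⟩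
  have hv' : ∀ i, 0 ≤ v' i := by rwa [imOf_PA] at him'
  obtain ⟨p, hpK, hpmin⟩ := exists_min hdom' (isClosed_PA M u') v'
  have hp0 : ∀ i, 0 ≤ p i := hpK.1
  have hpe : M *ᵥ p = u' := hpK.2
  set g : Fin n → ℝ := v' - p with hg
  set ν := euclNorm g with hν
  have hν0 : 0 < ν := by
    apply en_pos_of_ne
    intro h0
    rw [hg, sub_eq_zero] at h0
    exact hnot (h0 ▸ hpK)
  set J : Finset (Fin n) := Finset.univ.filter (fun i => p i = 0) with hJ
  set gh : Fin n → ℝ := ν⁻¹ • g with hgh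
  have hgh1 : euclNorm gh = 1 := by
    rw [hgh, en_smul, abs_of_pos (inv_pos.2 hν0), inv_mul_cancel₀ (ne_of_gt hν0)]
  have hghJ : ∀ i ∈ J, 0 ≤ gh i := by
    intro i hi
    have hpi : p i = 0 := (Finset.mem_filter.1 hi).2
    have : g i = v' i := by rw [hg]; simp [hpi]
    rw [hgh]
    simp only [Pi.smul_apply, smul_eq_mul, this]
    exact mul_nonneg (le_of_lt (inv_pos.2 hν0)) (hv' i)
  have hghz : ∀ z : Fin n → ℝ, M *ᵥ z = 0 → (∀ i ∈ J, 0 ≤ z i) → gh ⬝ᵥ z ≤ 0 := by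
    intro z hz1 hz2
    obtain ⟨t₀, ht₀0, _, htc⟩ := exists_uniform_t (fun i t => 0 ≤ p i + t * z i) (by
      intro i
      by_cases hpi : p i = 0
      · refine ⟨1, one_pos, fun t ht0 _ => ?_⟩
        show 0 ≤ p i + t * z i
        rw [hpi, zero_add]
        exact mul_nonneg (le_of_lt ht0) (hz2 i (Finset.mem_filter.2 ⟨Finset.mem_univ i, hpi⟩))
      · have hppos : 0 < p i := lt_of_le_of_ne (hp0 i) (Ne.symm hpi)
        rcases le_or_gt 0 (z i) with hzi | hzi
        · exact ⟨1, one_pos, fun t ht0 _ =>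
            add_nonneg (hp0 i) (mul_nonneg (le_of_lt ht0) hzi)⟩
        · refine ⟨p i / (-z i), div_pos hppos (by linarith), fun t ht0 hti => ?_⟩
          have : t * (-z i) ≤ (p i / (-z i)) * (-z i) :=
            mul_le_mul_of_nonneg_right hti (by linarith)
          rw [div_mul_cancel₀ _ (by linarith : -z i ≠ 0)] at this
          show 0 ≤ p i + t * z i
          nlinarith)
    have hkey : g ⬝ᵥ ((p + z) - p) ≤ 0 := by
      apply inner_nonpos_of_min hpmin ht₀0
      intro t ht0 htle
      have hppz : p + t • ((p + z) - p) = p + t • z := by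
        funext i
        simp only [Pi.add_apply, Pi.smul_apply, Pi.sub_apply, smul_eq_mul]
        ring
      rw [hppz]
      constructor
      · intro i
        have h1 : 0 ≤ p i + t₀ * z i := htc i
        show 0 ≤ (p + t • z) i
        simp only [Pi.add_apply, Pi.smul_apply, smul_eq_mul]
        rcases le_or_gt 0 (z i) with h | h
        · nlinarith [hp0 i]
        · have h2 : (t₀ - t) * z i ≤ 0 :=
            mul_nonpos_iff.2 (Or.inl ⟨by linarith, le_of_lt h⟩)
          nlinarith [hp0 i]
      · rw [Matrix.mulVec_add, Matrix.mulVec_smul, hz1, hpe]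
        funext j; simp
    have hgz : g ⬝ᵥ z ≤ 0 := by
      have : (p + z) - p = z := by funext i; simp
      rwa [this] at hkey
    rw [hgh, smul_dotProduct, smul_eq_mul]
    exact mul_nonpos_iff.2 (Or.inl ⟨le_of_lt (inv_pos.2 hν0), hgz⟩)
  have hghZ : gh ∈ Z J := ⟨hgh1, hghJ, hghz⟩
  -- compactness: mJ J > 0
  have hZcl : IsClosed (Z J) := by
    have heq : Z J = {h : Fin n → ℝ | euclNorm h = 1} ∩
        ((⋂ i ∈ J, {h : Fin n → ℝ | 0 ≤ h i}) ∩
         (⋂ z ∈ {z : Fin n → ℝ | M *ᵥ z = 0 ∧ ∀ i ∈ J, 0 ≤ z i}, {h : Fin n → ℝ | h ⬝ᵥ z ≤ 0})) := by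
      ext h
      simp only [hZ, Set.mem_setOf_eq, Set.mem_inter_iff, Set.mem_iInter, and_imp]
      try tauto
    rw [heq]
    refine (isClosed_eq continuous_en continuous_const).inter (IsClosed.inter ?_ ?_)
    · exact isClosed_biInter fun i _ => isClosed_le continuous_const (continuous_apply i)
    · exact isClosed_biInter fun z _ => isClosed_le (dot_continuous z) continuous_const
  have hZbd : Z J ⊆ Set.pi Set.univ (fun _ => Set.Icc (-1 : ℝ) 1) := by
    rintro h ⟨h1, _, _⟩ i _
    have := abs_coord_le h i
    rw [h1] at this
    rw [abs_le] at this
    exact ⟨this.1, this.2⟩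
  have hZcp : IsCompact (Z J) :=
    (isCompact_univ_pi fun _ => isCompact_Icc).of_isClosed_subset hZcl hZbd
  obtain ⟨h₀, hh₀Z, hh₀min⟩ := hZcp.exists_isMinOn ⟨gh, hghZ⟩ hFcont.continuousOn
  have hF₀ : 0 < F h₀ := by
    rcases lt_or_eq_of_le (hFnn h₀) with h | h
    · exact h
    · exfalso
      have hMz : M *ᵥ h₀ = 0 := by
        rw [hF] at h
        exact (en_eq_zero_iff _).1 h.symm
      have := hh₀Z.2.2 h₀ hMz hh₀Z.2.1
      have hsq := en_sq h₀
      rw [hh₀Z.1] at hsq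
      nlinarith
  have hmJpos : 0 < mJ J := by
    apply lt_of_lt_of_le hF₀
    have himg_ne : (F '' Z J).Nonempty := ⟨F gh, ⟨gh, hghZ, rfl⟩⟩
    apply le_csInf himg_ne
    rintro r' ⟨h', hh', rfl⟩
    exact hh₀min hh'
  have hFgh : mJ J ≤ F gh := csInf_le (hbdbelow J) ⟨gh, hghZ, rfl⟩
  have hFghpos : 0 < F gh := lt_of_lt_of_le hmJpos hFgh
  -- value computation
  have hnum : distWith euclNorm v' (PA M u') = ν := distWith_eq_of_min hpK hpmin
  have hδ : distWith euclNorm u' (invOf (PA M) v') = euclNorm (M *ᵥ g) := by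
    rw [invOf_PA hv', distWith_singleton, en_sub_comm]
    congr 1
    rw [hg, Matrix.mulVec_sub, hpe]
  have hMg : euclNorm (M *ᵥ g) = ν * F gh := by
    have hgν : g = ν • gh := by
      rw [hgh, smul_smul, mul_inv_cancel₀ (ne_of_gt hν0), one_smul]
    rw [hgν, Matrix.mulVec_smul, en_smul, abs_of_pos hν0, hF]
  rw [hnum, hδ, hMg]
  have hr : ν / (ν * F gh) = (F gh)⁻¹ := by
    rw [← div_div, div_self (ne_of_gt hν0), one_div]
  rw [hr]
  calc (F gh)⁻¹ ≤ (mJ J)⁻¹ := by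
        apply inv_anti₀ hmJpos hFgh
    _ ≤ ∑ J' : Finset (Fin n), (mJ J')⁻¹ :=
        Finset.single_le_sum (fun J' _ => hbJnn J') (Finset.mem_univ J)

end Stmt11Aux
namespace Stmt11Aux

open Matrix Set

variable {m n : ℕ}

lemma small_t_single (a w : ℝ) (hw : 0 < w) :
    ∃ ti : ℝ, 0 < ti ∧ ∀ t : ℝ, 0 < t → t ≤ ti → t * a ≤ w := by
  refine ⟨w / (1 + |a|), div_pos hw (by positivity), ?_⟩
  intro t ht0 hti
  have h1 : t * a ≤ t * |a| := mul_le_mul_of_nonneg_left (le_abs_self a) (le_of_lt ht0)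
  have h2 : t * |a| ≤ (w / (1 + |a|)) * |a| := mul_le_mul_of_nonneg_right hti (abs_nonneg a)
  have h3 : (w / (1 + |a|)) * |a| ≤ (w / (1 + |a|)) * (1 + |a|) := by
    apply mul_le_mul_of_nonneg_left (by linarith) (le_of_lt (div_pos hw (by positivity)))
  rw [div_mul_cancel₀ _ (by positivity : (1:ℝ) + |a| ≠ 0)] at h3
  linarith

/-- The dual box solution mapping. -/
def dualBoxMap (A : Matrix (Fin m) (Fin n) ℝ) (ℓ u : Fin n → ℝ) :
    (Fin n → ℝ) → Set (Fin m → ℝ) :=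
  fun c => {y : Fin m → ℝ | c - Aᵀ *ᵥ y ∈ boxSet ℓ u}

lemma mem_dualBoxMap {A : Matrix (Fin m) (Fin n) ℝ} {ℓ u c : Fin n → ℝ} {y : Fin m → ℝ} :
    y ∈ dualBoxMap A ℓ u c ↔ ∀ i, ℓ i ≤ c i - (Aᵀ *ᵥ y) i ∧ c i - (Aᵀ *ᵥ y) i ≤ u i := by
  rfl

lemma imOf_dualBoxMap {A : Matrix (Fin m) (Fin n) ℝ} {ℓ u : Fin n → ℝ} (hlu : ∀ i, ℓ i < u i) :
    imOf (dualBoxMap A ℓ u) = Set.univ := by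
  ext y
  simp only [imOf, Set.mem_iUnion, Set.mem_univ, iff_true]
  refine ⟨Aᵀ *ᵥ y + ℓ, ?_⟩
  intro i
  simp only [Pi.add_apply, Pi.sub_apply]
  constructor <;> simp <;> linarith [hlu i]

lemma invOf_dualBoxMap {A : Matrix (Fin m) (Fin n) ℝ} {ℓ u : Fin n → ℝ} {y : Fin m → ℝ} :
    invOf (dualBoxMap A ℓ u) y =
      {c | ∀ i, (Aᵀ *ᵥ y) i + ℓ i ≤ c i ∧ c i ≤ (Aᵀ *ᵥ y) i + u i} := by
  ext c
  simp only [invOf, Set.mem_setOf_eq, mem_dualBoxMap]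
  constructor <;> intro h i <;> have := h i <;> constructor <;> linarith [this.1, this.2]

lemma isClosed_dualBoxMap (A : Matrix (Fin m) (Fin n) ℝ) (ℓ u c : Fin n → ℝ) :
    IsClosed (dualBoxMap A ℓ u c) := by
  have heq : dualBoxMap A ℓ u c =
      ⋂ i, ({y : Fin m → ℝ | ℓ i ≤ c i - (Aᵀ *ᵥ y) i} ∩ {y | c i - (Aᵀ *ᵥ y) i ≤ u i}) := by
    ext y
    simp only [mem_dualBoxMap, Set.mem_iInter, Set.mem_inter_iff, Set.mem_setOf_eq]
  rw [heq]
  have hcont : ∀ i : Fin n, Continuous fun y : Fin m → ℝ => c i - (Aᵀ *ᵥ y) i :=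
    fun i => continuous_const.sub ((continuous_apply i).comp (cont_mulVec Aᵀ))
  exact isClosed_iInter fun i =>
    (isClosed_le continuous_const (hcont i)).inter (isClosed_le (hcont i) continuous_const)

lemma convex_dualBoxMap (A : Matrix (Fin m) (Fin n) ℝ) (ℓ u c : Fin n → ℝ) :
    Convex ℝ (dualBoxMap A ℓ u c) := by
  intro y hy y' hy' a b ha hb hab
  intro i
  have h1 := (hy i).1; have h2 := (hy i).2; have h3 := (hy' i).1; have h4 := (hy' i).2
  simp only [Pi.sub_apply] at h1 h2 h3 h4
  have hmv : (Aᵀ *ᵥ (a • y + b • y')) i = a * (Aᵀ *ᵥ y) i + b * (Aᵀ *ᵥ y') i := by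
    rw [Matrix.mulVec_add, Matrix.mulVec_smul, Matrix.mulVec_smul]
    simp [smul_eq_mul]
  simp only [Pi.sub_apply, hmv]
  have f1 := mul_le_mul_of_nonneg_left h1 ha
  have f2 := mul_le_mul_of_nonneg_left h2 ha
  have f3 := mul_le_mul_of_nonneg_left h3 hb
  have f4 := mul_le_mul_of_nonneg_left h4 hb
  have el : a * ℓ i + b * ℓ i = ℓ i := by rw [← add_mul, hab, one_mul]
  have eu : a * u i + b * u i = u i := by rw [← add_mul, hab, one_mul]
  have ec : a * (c i - (Aᵀ *ᵥ y) i) + b * (c i - (Aᵀ *ᵥ y') i) =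
      c i - (a * (Aᵀ *ᵥ y) i + b * (Aᵀ *ᵥ y') i) := by
    have : a * c i + b * c i = c i := by rw [← add_mul, hab, one_mul]
    nlinarith [this]
  constructor <;> linarith [f1, f2, f3, f4, el, eu, ec]

lemma mem_PAstar {M : Matrix (Fin m) (Fin n) ℝ} {c : Fin n → ℝ} {y : Fin m → ℝ} :
    y ∈ PAstar M c ↔ ∀ i, (Mᵀ *ᵥ y) i ≤ c i := Iff.rfl

lemma imOf_PAstar {M : Matrix (Fin m) (Fin n) ℝ} : imOf (PAstar M) = Set.univ := by
  ext y
  simp only [imOf, Set.mem_iUnion, Set.mem_univ, iff_true]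
  exact ⟨Mᵀ *ᵥ y, fun i => le_rfl⟩

lemma invOf_PAstar {M : Matrix (Fin m) (Fin n) ℝ} {y : Fin m → ℝ} :
    invOf (PAstar M) y = {c | ∀ i, (Mᵀ *ᵥ y) i ≤ c i} := rfl

lemma isClosed_PAstar (M : Matrix (Fin m) (Fin n) ℝ) (c : Fin n → ℝ) :
    IsClosed (PAstar M c) := by
  have heq : PAstar M c = ⋂ i, {y : Fin m → ℝ | (Mᵀ *ᵥ y) i ≤ c i} := by
    ext y; simp [PAstar, Set.mem_iInter]
  rw [heq]
  exact isClosed_iInter fun i =>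
    isClosed_le ((continuous_apply i).comp (cont_mulVec Mᵀ)) continuous_const

lemma convex_PAstar (M : Matrix (Fin m) (Fin n) ℝ) (c : Fin n → ℝ) :
    Convex ℝ (PAstar M c) := by
  intro y hy y' hy' a b ha hb hab i
  have hmv : (Mᵀ *ᵥ (a • y + b • y')) i = a * (Mᵀ *ᵥ y) i + b * (Mᵀ *ᵥ y') i := by
    rw [Matrix.mulVec_add, Matrix.mulVec_smul, Matrix.mulVec_smul]
    simp [smul_eq_mul]
  have h1 := hy i
  have h2 := hy' i
  have e1 : a * c i + b * c i = c i := by rw [← add_mul, hab, one_mul]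
  show (Mᵀ *ᵥ (a • y + b • y')) i ≤ c i
  rw [hmv]
  nlinarith [mul_le_mul_of_nonneg_left h1 ha, mul_le_mul_of_nonneg_left h2 hb]

end Stmt11Aux
namespace Stmt11Aux

open Matrix Set

variable {m n : ℕ}

lemma part2_hsub (A : Matrix (Fin m) (Fin n) ℝ) (ℓ u : Fin n → ℝ) (hlu : ∀ i, ℓ i < u i)
    {d : Fin n → ℝ} (hd : IsSignVector d) :
    ratioSet (PAstar (A * Matrix.diagonal d)) ⊆ ratioSet (dualBoxMap A ℓ u) := by
  classical
  intro r hr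
  obtain ⟨c', y₀, hdom', _him, hnot, rfl⟩ := hr
  set M := A * Matrix.diagonal d with hM
  set K' : Set (Fin m → ℝ) := PAstar M c' with hK'
  have hK'ne : K'.Nonempty := hdom'
  obtain ⟨ys, hyK, hymin⟩ := exists_min hK'ne (isClosed_PAstar M c') y₀
  set ν := euclNorm (y₀ - ys) with hν
  have hν0 : 0 < ν := by
    apply en_pos_of_ne
    intro h0
    rw [sub_eq_zero] at h0
    exact hnot (h0 ▸ hyK)
  set δ := euclNorm (fun i => max ((Mᵀ *ᵥ y₀) i - c' i) 0) with hδ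
  have hδd : distWith euclNorm c' (invOf (PAstar M) y₀) = δ := by
    rw [invOf_PAstar, distWith_upperset]
  -- choose t
  obtain ⟨t, ht0, ht1, htc⟩ := exists_uniform_t
      (fun i t => t * (c' i - (Mᵀ *ᵥ ys) i) ≤ u i - ℓ i ∧
                  t * (c' i - (Mᵀ *ᵥ y₀) i) ≤ u i - ℓ i) (by
    intro i
    obtain ⟨t1, h1, H1⟩ := small_t_single (c' i - (Mᵀ *ᵥ ys) i) (u i - ℓ i) (by linarith [hlu i])
    obtain ⟨t2, h2, H2⟩ := small_t_single (c' i - (Mᵀ *ᵥ y₀) i) (u i - ℓ i) (by linarith [hlu i])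
    exact ⟨min t1 t2, lt_min h1 h2, fun t ht0 htle =>
      ⟨H1 t ht0 (le_trans htle (min_le_left _ _)), H2 t ht0 (le_trans htle (min_le_right _ _))⟩⟩)
  set bc : Fin n → ℝ := fun i => if d i = 1 then ℓ i else u i with hbc
  have hdne : ∀ i, d i = -1 → ¬ (d i = 1) := by
    intro i h h1; rw [h1] at h; norm_num at h
  have hbcl : ∀ i, d i = 1 → bc i = ℓ i := by intro i h; rw [hbc]; simp [h]
  have hbcu : ∀ i, d i = -1 → bc i = u i := by
    intro i h; rw [hbc]; simp [if_neg (hdne i h)]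
  set ct : Fin n → ℝ := bc + t • (d * c') with hct
  have hres : ∀ (y : Fin m → ℝ) (i : Fin n),
      ct i - (Aᵀ *ᵥ (t • y)) i = bc i + t * (d i * (c' i - (Mᵀ *ᵥ y) i)) := by
    intro y i
    have hmvt : (Aᵀ *ᵥ (t • y)) i = t * (Aᵀ *ᵥ y) i := by
      rw [Matrix.mulVec_smul]; simp
    have hMT : (Mᵀ *ᵥ y) i = d i * (Aᵀ *ᵥ y) i := by
      rw [hM, mvT_diag]; simp
    rw [hct, hmvt, hMT]
    simp only [Pi.add_apply, Pi.smul_apply, Pi.mul_apply, smul_eq_mul]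
    rcases hd i with hdi | hdi <;> rw [hdi] <;> ring
  set T : Set (Fin m → ℝ) := {z | ∀ i, t * (c' i - (Mᵀ *ᵥ z) i) ≤ u i - ℓ i} with hT
  have hmemiff : ∀ y : Fin m → ℝ, (t • y) ∈ dualBoxMap A ℓ u ct ↔ (y ∈ K' ∧ y ∈ T) := by
    intro y
    rw [mem_dualBoxMap]
    constructor
    · intro h
      constructor
      · intro i
        have := h i
        rw [hres y i] at this
        rcases hd i with hdi | hdi
        · rw [hbcl i hdi, hdi, one_mul] at this
          show (Mᵀ *ᵥ y) i ≤ c' i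
          nlinarith [this.1]
        · rw [hbcu i hdi, hdi] at this
          show (Mᵀ *ᵥ y) i ≤ c' i
          nlinarith [this.2, hlu i]
      · intro i
        have := h i
        rw [hres y i] at this
        rcases hd i with hdi | hdi
        · rw [hbcl i hdi, hdi, one_mul] at this
          linarith [this.2]
        · rw [hbcu i hdi, hdi] at this
          nlinarith [this.1]
    · rintro ⟨h1, h2⟩ i
      rw [hres y i]
      have hq : (Mᵀ *ᵥ y) i ≤ c' i := h1 i
      have hTq := h2 i
      rcases hd i with hdi | hdi
      · rw [hbcl i hdi, hdi, one_mul]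
        constructor
        · nlinarith
        · linarith
      · rw [hbcu i hdi, hdi]
        constructor
        · nlinarith
        · nlinarith
  have himg : dualBoxMap A ℓ u ct = (fun y => t • y) '' (K' ∩ T) := by
    ext y'
    constructor
    · intro h
      refine ⟨t⁻¹ • y', ?_, ?_⟩
      · have hy' : t • (t⁻¹ • y') = y' := by
          rw [smul_smul, mul_inv_cancel₀ (ne_of_gt ht0), one_smul]
        rw [← hy'] at h
        exact (hmemiff _).1 h
      · show t • (t⁻¹ • y') = y'
        rw [smul_smul, mul_inv_cancel₀ (ne_of_gt ht0), one_smul]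
    · rintro ⟨z, hz, rfl⟩
      exact (hmemiff z).2 ⟨hz.1, hz.2⟩
  have hysT : ys ∈ T := by
    intro i
    exact (htc i).1
  have hφiso : ∀ z ∈ K' ∩ T, euclNorm (t • y₀ - t • z) = t * euclNorm (y₀ - z) := by
    intro z _
    rw [← smul_sub, en_smul, abs_of_pos ht0]
  have hnum : distWith euclNorm (t • y₀) ((fun y => t • y) '' (K' ∩ T)) =
      t * distWith euclNorm y₀ (K' ∩ T) :=
    distWith_image (le_of_lt ht0) hφiso
  have hKT : distWith euclNorm y₀ (K' ∩ T) = ν := by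
    apply le_antisymm (distWith_le (S := K' ∩ T) ⟨hyK, hysT⟩)
    exact le_distWith (S := K' ∩ T) ⟨ys, hyK, hysT⟩ fun s hs => hymin s hs.1
  -- denominator
  have hden : distWith euclNorm ct (invOf (dualBoxMap A ℓ u) (t • y₀)) = t * δ := by
    rw [invOf_dualBoxMap, distWith_bandset _ _ _ (by
      intro i
      have := hlu i
      linarith)]
    have hfn : (fun i => max ((Aᵀ *ᵥ (t • y₀)) i + ℓ i - ct i) 0 +
        max (ct i - ((Aᵀ *ᵥ (t • y₀)) i + u i)) 0) =
        t • (fun i => max ((Mᵀ *ᵥ y₀) i - c' i) 0) := by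
      funext i
      have hr1 : ct i - (Aᵀ *ᵥ (t • y₀)) i = bc i + t * (d i * (c' i - (Mᵀ *ᵥ y₀) i)) := hres y₀ i
      have hTq := (htc i).2
      simp only [Pi.smul_apply, smul_eq_mul]
      rcases hd i with hdi | hdi
      · rw [hbcl i hdi, hdi, one_mul] at hr1
        have e1 : (Aᵀ *ᵥ (t • y₀)) i + ℓ i - ct i = -(t * (c' i - (Mᵀ *ᵥ y₀) i)) := by linarith
        have e2 : ct i - ((Aᵀ *ᵥ (t • y₀)) i + u i) = t * (c' i - (Mᵀ *ᵥ y₀) i) - (u i - ℓ i) := by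
          linarith
        rw [e1, e2, max_eq_right (by linarith : t * (c' i - (Mᵀ *ᵥ y₀) i) - (u i - ℓ i) ≤ 0), add_zero]
        rcases le_total (c' i - (Mᵀ *ᵥ y₀) i) 0 with h | h
        · rw [max_eq_left (by nlinarith), max_eq_left (by linarith)]
          ring
        · rw [max_eq_right (by nlinarith), max_eq_right (by linarith)]
          ring
      · rw [hbcu i hdi, hdi] at hr1
        have e1 : (Aᵀ *ᵥ (t • y₀)) i + ℓ i - ct i = t * (c' i - (Mᵀ *ᵥ y₀) i) - (u i - ℓ i) := by
          linarith
        have e2 : ct i - ((Aᵀ *ᵥ (t • y₀)) i + u i) = -(t * (c' i - (Mᵀ *ᵥ y₀) i)) := by linarith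
        rw [e1, e2, max_eq_right (by linarith : t * (c' i - (Mᵀ *ᵥ y₀) i) - (u i - ℓ i) ≤ 0), zero_add]
        rcases le_total (c' i - (Mᵀ *ᵥ y₀) i) 0 with h | h
        · rw [max_eq_left (by nlinarith), max_eq_left (by linarith)]
          ring
        · rw [max_eq_right (by nlinarith), max_eq_right (by linarith)]
          ring
    rw [hfn, en_smul, abs_of_pos ht0, hδ]
  -- memberships
  have hdom2 : ct ∈ domOf (dualBoxMap A ℓ u) := by
    refine ⟨t • ys, ?_⟩
    rw [himg]
    exact ⟨ys, ⟨hyK, hysT⟩, rfl⟩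
  have him2 : (t • y₀) ∈ imOf (dualBoxMap A ℓ u) := by
    rw [imOf_dualBoxMap hlu]
    trivial
  have hnot2 : (t • y₀) ∉ dualBoxMap A ℓ u ct := by
    intro hmem
    have h0 := distWith_zero_of_mem hmem
    rw [himg, hnum, hKT] at h0
    nlinarith
  have hval : distWith euclNorm y₀ (PAstar M c') / distWith euclNorm c' (invOf (PAstar M) y₀) =
      distWith euclNorm (t • y₀) (dualBoxMap A ℓ u ct) /
        distWith euclNorm ct (invOf (dualBoxMap A ℓ u) (t • y₀)) := by
    rw [himg, hnum, hKT, hden, hδd]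
    have hnumK : distWith euclNorm y₀ (PAstar M c') = ν := distWith_eq_of_min hyK hymin
    rw [hnumK, mul_div_mul_left _ _ (ne_of_gt ht0)]
  exact ⟨ct, t • y₀, hdom2, him2, hnot2, hval⟩

end Stmt11Aux
namespace Stmt11Aux

open Matrix Set

variable {m n : ℕ}

lemma part2_hdom (A : Matrix (Fin m) (Fin n) ℝ) (ℓ u : Fin n → ℝ) (hlu : ∀ i, ℓ i < u i) :
    ∀ r ∈ ratioSet (dualBoxMap A ℓ u),
      ∃ d, IsSignVector d ∧ ∃ r' ∈ ratioSet (PAstar (A * Matrix.diagonal d)), r ≤ r' := by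
  classical
  rintro r ⟨cc, y₀, hdomc, _him, hnot, rfl⟩
  set K : Set (Fin m → ℝ) := dualBoxMap A ℓ u cc with hK
  have hKne : K.Nonempty := hdomc
  obtain ⟨ys, hyK, hymin⟩ := exists_min hKne (isClosed_dualBoxMap A ℓ u cc) y₀
  set ν := euclNorm (y₀ - ys) with hν
  have hν0 : 0 < ν := by
    apply en_pos_of_ne
    intro h0
    rw [sub_eq_zero] at h0
    exact hnot (h0 ▸ hyK)
  set rs : Fin n → ℝ := fun i => cc i - (Aᵀ *ᵥ ys) i with hrsdef
  have hrs : ∀ i, ℓ i ≤ rs i ∧ rs i ≤ u i := by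
    intro i
    exact (mem_dualBoxMap.1 hyK) i
  set d : Fin n → ℝ := fun i => if rs i - ℓ i ≤ u i - rs i then 1 else -1 with hddef
  have hd : IsSignVector d := by
    intro i
    rw [hddef]
    by_cases h : rs i - ℓ i ≤ u i - rs i
    · left; simp only []; rw [if_pos h]
    · right; simp only []; rw [if_neg h]
  have hdne : ∀ i, d i = -1 → ¬ (d i = 1) := by
    intro i h h1; rw [h1] at h; norm_num at h
  have hdl : ∀ i, rs i = ℓ i → d i = 1 := by
    intro i h
    rw [hddef]
    simp only []
    rw [if_pos (by rw [h]; linarith [hlu i, (hrs i).2])]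
  have hdu : ∀ i, rs i = u i → d i = -1 := by
    intro i h
    rw [hddef]
    simp only []
    rw [if_neg (by rw [h]; intro hcon; linarith [hlu i])]
  set M := A * Matrix.diagonal d with hM
  have hMT : ∀ (y : Fin m → ℝ) (i : Fin n), (Mᵀ *ᵥ y) i = d i * (Aᵀ *ᵥ y) i := by
    intro y i
    rw [hM, mvT_diag]; simp
  set c'' : Fin n → ℝ := fun i => if d i = 1 then cc i - ℓ i else u i - cc i with hc''
  have hc1 : ∀ i, d i = 1 → c'' i = cc i - ℓ i := by intro i h; rw [hc'']; simp [h]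
  have hc2 : ∀ i, d i = -1 → c'' i = u i - cc i := by
    intro i h; rw [hc'']; simp [if_neg (hdne i h)]
  have hsubK : K ⊆ PAstar M c'' := by
    intro y hy i
    have h1 := (mem_dualBoxMap.1 hy) i
    rw [hMT y i]
    rcases hd i with hdi | hdi
    · rw [hdi, one_mul, hc1 i hdi]
      linarith [h1.1]
    · rw [hdi, hc2 i hdi]
      nlinarith [h1.2]
  have hysK2 : ys ∈ PAstar M c'' := hsubK hyK
  have hminK2 : ∀ w ∈ PAstar M c'', ν ≤ euclNorm (y₀ - w) := by
    apply proj_transfer (convex_dualBoxMap A ℓ u cc) hyK hymin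
    intro w hw
    have h1 : ∀ i, rs i = ℓ i → ℓ i ≤ cc i - (Aᵀ *ᵥ w) i := by
      intro i h
      have hdi := hdl i h
      have := hw i
      rw [hMT w i, hdi, one_mul, hc1 i hdi] at this
      linarith
    have h2 : ∀ i, rs i = u i → cc i - (Aᵀ *ᵥ w) i ≤ u i := by
      intro i h
      have hdi := hdu i h
      have := hw i
      rw [hMT w i, hdi, hc2 i hdi] at this
      nlinarith
    obtain ⟨t, ht0, ht1, htc⟩ := seg_into_box hlu (fun i => hrs i) h1 h2
    refine ⟨t, ht0, ht1, ?_⟩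
    rw [mem_dualBoxMap]
    intro i
    have hres : cc i - (Aᵀ *ᵥ (ys + t • (w - ys))) i =
        rs i + t * ((cc i - (Aᵀ *ᵥ w) i) - rs i) := by
      rw [Matrix.mulVec_add, Matrix.mulVec_smul, Matrix.mulVec_sub]
      simp only [Pi.add_apply, Pi.smul_apply, Pi.sub_apply, smul_eq_mul, hrsdef]
      ring
    rw [hres]
    exact htc i
  have hdist2 : distWith euclNorm y₀ (PAstar M c'') = ν :=
    distWith_eq_of_min hysK2 hminK2
  have hnot2 : y₀ ∉ PAstar M c'' := by
    intro hmem
    have h0 := distWith_zero_of_mem hmem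
    rw [hdist2] at h0
    exact absurd h0 (ne_of_gt hν0)
  set δ' := euclNorm (fun i => max ((Mᵀ *ᵥ y₀) i - c'' i) 0) with hδ'
  have hδ'd : distWith euclNorm c'' (invOf (PAstar M) y₀) = δ' := by
    rw [invOf_PAstar, distWith_upperset]
  set δ := euclNorm (fun i => max ((Aᵀ *ᵥ y₀) i + ℓ i - cc i) 0 +
      max (cc i - ((Aᵀ *ᵥ y₀) i + u i)) 0) with hδbig
  have hδd : distWith euclNorm cc (invOf (dualBoxMap A ℓ u) y₀) = δ := by
    rw [invOf_dualBoxMap, distWith_bandset _ _ _ (by intro i; linarith [hlu i])]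
  have hcomp : ∀ i, max ((Mᵀ *ᵥ y₀) i - c'' i) 0 ≤
      max ((Aᵀ *ᵥ y₀) i + ℓ i - cc i) 0 + max (cc i - ((Aᵀ *ᵥ y₀) i + u i)) 0 := by
    intro i
    rw [hMT y₀ i]
    rcases hd i with hdi | hdi
    · rw [hdi, one_mul, hc1 i hdi]
      have e : (Aᵀ *ᵥ y₀) i - (cc i - ℓ i) = (Aᵀ *ᵥ y₀) i + ℓ i - cc i := by ring
      rw [e]
      exact le_add_of_nonneg_right (le_max_right _ _)
    · rw [hdi, hc2 i hdi]
      have e : -1 * (Aᵀ *ᵥ y₀) i - (u i - cc i) = cc i - ((Aᵀ *ᵥ y₀) i + u i) := by ring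
      rw [e]
      exact le_add_of_nonneg_left (le_max_right _ _)
  have hδle : δ' ≤ δ := by
    apply en_le_of_dot_le
    apply Finset.sum_le_sum
    intro i _
    exact mul_self_le_mul_self (le_max_right _ _) (hcomp i)
  have hδ'pos : 0 < δ' := by
    have hex : ∃ i, c'' i < (Mᵀ *ᵥ y₀) i := by
      by_contra hcon
      push_neg at hcon
      exact hnot2 fun i => hcon i
    obtain ⟨i, hi⟩ := hex
    have h1 : (0:ℝ) < max ((Mᵀ *ᵥ y₀) i - c'' i) 0 := by
      rw [max_eq_left (by linarith)]
      linarith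
    calc (0:ℝ) < max ((Mᵀ *ᵥ y₀) i - c'' i) 0 := h1
      _ ≤ |(fun i => max ((Mᵀ *ᵥ y₀) i - c'' i) 0) i| := le_abs_self _
      _ ≤ δ' := by rw [hδ']; exact abs_coord_le (fun i => max ((Mᵀ *ᵥ y₀) i - c'' i) 0) i
  have hval : distWith euclNorm y₀ (dualBoxMap A ℓ u cc) /
      distWith euclNorm cc (invOf (dualBoxMap A ℓ u) y₀) ≤
      distWith euclNorm y₀ (PAstar M c'') / distWith euclNorm c'' (invOf (PAstar M) y₀) := by
    rw [distWith_eq_of_min hyK hymin, hδd, hdist2, hδ'd]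
    apply div_le_div_of_nonneg_left (le_of_lt hν0) hδ'pos hδle
  refine ⟨d, hd, _, ⟨c'', y₀, ⟨ys, hysK2⟩, by rw [imOf_PAstar]; trivial, hnot2, rfl⟩, hval⟩

end Stmt11Aux
namespace Stmt11Aux

open Matrix Set

variable {m n : ℕ}

lemma part2_hbdd (A : Matrix (Fin m) (Fin n) ℝ) {d : Fin n → ℝ} (hd : IsSignVector d) :
    ∃ B, ∀ r ∈ ratioSet (PAstar (A * Matrix.diagonal d)), r ≤ B := by
  classical
  set M := A * Matrix.diagonal d with hM
  set Z : Finset (Fin n) → Set (Fin m → ℝ) := fun J =>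
    {h | euclNorm h = 1 ∧ ∀ z : Fin m → ℝ, (∀ i ∈ J, (Mᵀ *ᵥ z) i ≤ 0) → h ⬝ᵥ z ≤ 0} with hZ
  set F : Finset (Fin n) → (Fin m → ℝ) → ℝ := fun J h =>
    euclNorm (fun i => if i ∈ J then max ((Mᵀ *ᵥ h) i) 0 else 0) with hF
  set mJ : Finset (Fin n) → ℝ := fun J => sInf (F J '' Z J) with hmJ
  have hFcont : ∀ J, Continuous (F J) := by
    intro J
    apply continuous_en.comp
    apply continuous_pi
    intro i
    by_cases hiJ : i ∈ J
    · simp only [if_pos hiJ]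
      exact ((continuous_apply i).comp (cont_mulVec Mᵀ)).max continuous_const
    · simp only [if_neg hiJ]
      exact continuous_const
  have hFnn : ∀ J h, 0 ≤ F J h := fun J h => en_nonneg _
  have hbdbelow : ∀ J, BddBelow (F J '' Z J) := by
    intro J
    exact ⟨0, by rintro r ⟨h', _, rfl⟩; exact hFnn J h'⟩
  have hmJnn : ∀ J, 0 ≤ mJ J := by
    intro J
    rcases (Z J).eq_empty_or_nonempty with h | h
    · rw [hmJ]; simp only [h, Set.image_empty]; rw [Real.sInf_empty]
    · exact Real.sInf_nonneg (by rintro r ⟨h', _, rfl⟩; exact hFnn J h')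
  have hbJnn : ∀ J : Finset (Fin n), 0 ≤ (mJ J)⁻¹ := fun J => inv_nonneg.2 (hmJnn J)
  refine ⟨∑ J : Finset (Fin n), (mJ J)⁻¹, ?_⟩
  rintro r ⟨c', y₀, hdom', _him, hnot, rfl⟩
  obtain ⟨ys, hyK, hymin⟩ := exists_min hdom' (isClosed_PAstar M c') y₀
  set g : Fin m → ℝ := y₀ - ys with hg
  set ν := euclNorm g with hν
  have hν0 : 0 < ν := by
    apply en_pos_of_ne
    intro h0
    rw [hg, sub_eq_zero] at h0
    exact hnot (h0 ▸ hyK)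
  set J : Finset (Fin n) := Finset.univ.filter (fun i => (Mᵀ *ᵥ ys) i = c' i) with hJ
  have hJeq : ∀ i ∈ J, (Mᵀ *ᵥ ys) i = c' i := fun i hi => (Finset.mem_filter.1 hi).2
  have hstrict : ∀ i, i ∉ J → (Mᵀ *ᵥ ys) i < c' i := by
    intro i hi
    have hne : ¬ ((Mᵀ *ᵥ ys) i = c' i) := fun h => hi (Finset.mem_filter.2 ⟨Finset.mem_univ i, h⟩)
    exact lt_of_le_of_ne (hyK i) hne
  set gh : Fin m → ℝ := ν⁻¹ • g with hgh
  have hgh1 : euclNorm gh = 1 := by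
    rw [hgh, en_smul, abs_of_pos (inv_pos.2 hν0), inv_mul_cancel₀ (ne_of_gt hν0)]
  have hghz : ∀ z : Fin m → ℝ, (∀ i ∈ J, (Mᵀ *ᵥ z) i ≤ 0) → gh ⬝ᵥ z ≤ 0 := by
    intro z hz
    obtain ⟨t₀, ht₀0, _, htc⟩ := exists_uniform_t
        (fun i t => (Mᵀ *ᵥ ys) i + t * (Mᵀ *ᵥ z) i ≤ c' i) (by
      intro i
      by_cases hiJ : i ∈ J
      · refine ⟨1, one_pos, fun t ht0 _ => ?_⟩
        show (Mᵀ *ᵥ ys) i + t * (Mᵀ *ᵥ z) i ≤ c' i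
        have h1 := hJeq i hiJ
        have h2 := hz i hiJ
        nlinarith
      · obtain ⟨ti, hti0, hti⟩ := small_t_single ((Mᵀ *ᵥ z) i) (c' i - (Mᵀ *ᵥ ys) i)
          (by linarith [hstrict i hiJ])
        refine ⟨ti, hti0, fun t ht0 htle => ?_⟩
        show (Mᵀ *ᵥ ys) i + t * (Mᵀ *ᵥ z) i ≤ c' i
        have := hti t ht0 htle
        linarith)
    have hkey : g ⬝ᵥ ((ys + z) - ys) ≤ 0 := by
      apply inner_nonpos_of_min hymin ht₀0
      intro t ht0 htle
      have hppz : ys + t • ((ys + z) - ys) = ys + t • z := by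
        funext i
        simp only [Pi.add_apply, Pi.smul_apply, Pi.sub_apply, smul_eq_mul]
        ring
      rw [hppz]
      intro i
      have hmv : (Mᵀ *ᵥ (ys + t • z)) i = (Mᵀ *ᵥ ys) i + t * (Mᵀ *ᵥ z) i := by
        rw [Matrix.mulVec_add, Matrix.mulVec_smul]
        simp
      rw [hmv]
      have h1 : (Mᵀ *ᵥ ys) i + t₀ * (Mᵀ *ᵥ z) i ≤ c' i := htc i
      rcases le_or_gt ((Mᵀ *ᵥ z) i) 0 with h | h
      · have : t * (Mᵀ *ᵥ z) i ≤ 0 := mul_nonpos_iff.2 (Or.inl ⟨le_of_lt ht0, h⟩)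
        linarith [hyK i]
      · have : t * (Mᵀ *ᵥ z) i ≤ t₀ * (Mᵀ *ᵥ z) i :=
          mul_le_mul_of_nonneg_right htle (le_of_lt h)
        linarith
    have hgz : g ⬝ᵥ z ≤ 0 := by
      have : (ys + z) - ys = z := by funext i; simp
      rwa [this] at hkey
    rw [hgh, smul_dotProduct, smul_eq_mul]
    exact mul_nonpos_iff.2 (Or.inl ⟨le_of_lt (inv_pos.2 hν0), hgz⟩)
  have hghZ : gh ∈ Z J := ⟨hgh1, hghz⟩
  have hZcl : IsClosed (Z J) := by
    have heq : Z J = {h : Fin m → ℝ | euclNorm h = 1} ∩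
        (⋂ z ∈ {z : Fin m → ℝ | ∀ i ∈ J, (Mᵀ *ᵥ z) i ≤ 0}, {h : Fin m → ℝ | h ⬝ᵥ z ≤ 0}) := by
      ext h
      simp only [hZ, Set.mem_setOf_eq, Set.mem_inter_iff, Set.mem_iInter]
      try tauto
    rw [heq]
    exact (isClosed_eq continuous_en continuous_const).inter
      (isClosed_biInter fun z _ => isClosed_le (dot_continuous z) continuous_const)
  have hZbd : Z J ⊆ Set.pi Set.univ (fun _ => Set.Icc (-1 : ℝ) 1) := by
    rintro h ⟨h1, _⟩ i _
    have := abs_coord_le h i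
    rw [h1] at this
    rw [abs_le] at this
    exact ⟨this.1, this.2⟩
  have hZcp : IsCompact (Z J) :=
    (isCompact_univ_pi fun _ => isCompact_Icc).of_isClosed_subset hZcl hZbd
  obtain ⟨h₀, hh₀Z, hh₀min⟩ := hZcp.exists_isMinOn ⟨gh, hghZ⟩ (hFcont J).continuousOn
  have hF₀ : 0 < F J h₀ := by
    rcases lt_or_eq_of_le (hFnn J h₀) with h | h
    · exact h
    · exfalso
      have h0eq : (fun i => if i ∈ J then max ((Mᵀ *ᵥ h₀) i) 0 else 0) = 0 := by
        rw [hF] at h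
        exact (en_eq_zero_iff _).1 h.symm
      have hle : ∀ i ∈ J, (Mᵀ *ᵥ h₀) i ≤ 0 := by
        intro i hiJ
        have := congrFun h0eq i
        rw [if_pos hiJ] at this
        simp only [Pi.zero_apply] at this
        by_contra hcon
        push_neg at hcon
        rw [max_eq_left (le_of_lt hcon)] at this
        linarith
      have := hh₀Z.2 h₀ hle
      have hsq := en_sq h₀
      rw [hh₀Z.1] at hsq
      nlinarith
  have hmJpos : 0 < mJ J := by
    apply lt_of_lt_of_le hF₀
    have himg_ne : (F J '' Z J).Nonempty := ⟨F J gh, ⟨gh, hghZ, rfl⟩⟩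
    apply le_csInf himg_ne
    rintro r' ⟨h', hh', rfl⟩
    exact hh₀min hh'
  have hFgh : mJ J ≤ F J gh := csInf_le (hbdbelow J) ⟨gh, hghZ, rfl⟩
  have hFghpos : 0 < F J gh := lt_of_lt_of_le hmJpos hFgh
  -- value computation
  have hnum : distWith euclNorm y₀ (PAstar M c') = ν := distWith_eq_of_min hyK hymin
  set δ := euclNorm (fun i => max ((Mᵀ *ᵥ y₀) i - c' i) 0) with hδ
  have hδd : distWith euclNorm c' (invOf (PAstar M) y₀) = δ := by
    rw [invOf_PAstar, distWith_upperset]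
  have hscale : F J g = ν * F J gh := by
    have hgν : g = ν • gh := by
      rw [hgh, smul_smul, mul_inv_cancel₀ (ne_of_gt hν0), one_smul]
    rw [hF]
    simp only []
    have hfn : (fun i => if i ∈ J then max ((Mᵀ *ᵥ g) i) 0 else 0) =
        ν • (fun i => if i ∈ J then max ((Mᵀ *ᵥ gh) i) 0 else 0) := by
      funext i
      have hmv : (Mᵀ *ᵥ g) i = ν * (Mᵀ *ᵥ gh) i := by
        rw [hgν, Matrix.mulVec_smul]; simp
      simp only [Pi.smul_apply, smul_eq_mul]
      by_cases hiJ : i ∈ J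
      · rw [if_pos hiJ, if_pos hiJ, hmv]
        rcases le_total ((Mᵀ *ᵥ gh) i) 0 with h | h
        · rw [max_eq_right (by nlinarith), max_eq_right h, mul_zero]
        · rw [max_eq_left (by nlinarith), max_eq_left h]
      · rw [if_neg hiJ, if_neg hiJ, mul_zero]
    rw [hfn, en_smul, abs_of_pos hν0]
  have hFgδ : F J g ≤ δ := by
    rw [hF, hδ]
    apply en_le_of_dot_le
    apply Finset.sum_le_sum
    intro i _
    by_cases hiJ : i ∈ J
    · simp only [if_pos hiJ]
      have hmv : (Mᵀ *ᵥ g) i = (Mᵀ *ᵥ y₀) i - c' i := by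
        rw [hg, Matrix.mulVec_sub]
        simp only [Pi.sub_apply]
        rw [hJeq i hiJ]
      rw [hmv]
    · simp only [if_neg hiJ]
      simp [mul_self_nonneg, le_max_right]
  have hFgpos : 0 < F J g := by rw [hscale]; positivity
  rw [hnum, hδd]
  have hstep1 : ν / δ ≤ ν / F J g :=
    div_le_div_of_nonneg_left (le_of_lt hν0) hFgpos hFgδ
  have hstep2 : ν / F J g = (F J gh)⁻¹ := by
    rw [hscale, ← div_div, div_self (ne_of_gt hν0), one_div]
  calc ν / δ ≤ ν / F J g := hstep1
    _ = (F J gh)⁻¹ := hstep2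
    _ ≤ (mJ J)⁻¹ := inv_anti₀ hmJpos hFgh
    _ ≤ ∑ J' : Finset (Fin n), (mJ J')⁻¹ :=
        Finset.single_le_sum (fun J' _ => hbJnn J') (Finset.mem_univ J)

end Stmt11Aux
/-- `H(P_{A,𝔹,{0}}) = max_{D ∈ 𝕊} H(P_{AD})` and
`H(P_{Aᵀ,ℝ^m,−𝔹}) = max_{D ∈ 𝕊} H(P_{AD}*)`, with Euclidean norms. -/
theorem stmt11 {m n : ℕ} (A : Matrix (Fin m) (Fin n) ℝ)
    (ℓ u : Fin n → ℝ) (hlu : ∀ i, ℓ i < u i) :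
    hoffmanConst euclNorm euclNorm (solMap A (boxSet ℓ u) ({0} : Set (Fin m → ℝ))) =
      sSup {r | ∃ d : Fin n → ℝ, IsSignVector d ∧
        r = hoffmanConst euclNorm euclNorm (PA (A * Matrix.diagonal d))} ∧
    hoffmanConst euclNorm euclNorm
        (fun c => {y : Fin m → ℝ | c - Aᵀ *ᵥ y ∈ boxSet ℓ u}) =
      sSup {r | ∃ d : Fin n → ℝ, IsSignVector d ∧
        r = hoffmanConst euclNorm euclNorm (PAstar (A * Matrix.diagonal d))} := by
  constructor
  · exact Stmt11Aux.main_combine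
      (Stmt11Aux.ratioSet (solMap A (boxSet ℓ u) ({0} : Set (Fin m → ℝ))))
      (fun d => Stmt11Aux.ratioSet (PA (A * Matrix.diagonal d)))
      (Stmt11Aux.ratioSet_nonneg _)
      (fun d hd => Stmt11Aux.part1_hsub A ℓ u hlu hd)
      (fun r hr =>
        let ⟨d, hd, hm⟩ := Stmt11Aux.part1_hdom A ℓ u hlu r hr
        ⟨d, hd, r, hm, le_rfl⟩)
      (fun d hd => Stmt11Aux.part1_hbdd A hd)
  · exact Stmt11Aux.main_combine
      (Stmt11Aux.ratioSet (Stmt11Aux.dualBoxMap A ℓ u))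
      (fun d => Stmt11Aux.ratioSet (PAstar (A * Matrix.diagonal d)))
      (Stmt11Aux.ratioSet_nonneg _)
      (fun d hd => Stmt11Aux.part2_hsub A ℓ u hlu hd)
      (fun r hr => Stmt11Aux.part2_hdom A ℓ u hlu r hr)
      (fun d hd => Stmt11Aux.part2_hbdd A hd)
end

section
/- Let R ⊆ ℝ^n and S ⊆ ℝ^m be polyhedral cones and A ∈ ℝ^{m×n}. Then the solution mappings P_{A,R,S} and P_{Aᵀ,S*,−R*} are sublinear (their graphs are convex cones containing the origin), and the upper adjoint of P_{A,R,S} is P_{Aᵀ,S*,−R*}: for all w ∈ ℝ^n and z ∈ ℝ^m, z ∈ (P_{A,R,S})*(w) if and only if z ∈ S* and w − Aᵀz ∈ R*. -/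
open Matrix Set

lemma IsPolyhedron.convex' {E : Type*} [AddCommGroup E] [Module ℝ E] {S : Set E}
    (h : IsPolyhedron S) : Convex ℝ S := by
  obtain ⟨k, f, c, rfl⟩ := h
  intro x hx y hy a b ha hb hab
  intro i
  have := hx i; have := hy i
  have hfe : f i (a • x + b • y) = a * f i x + b * f i y := by
    rw [map_add, LinearMap.map_smul, LinearMap.map_smul]; rfl
  have h2 : a * f i x + b * f i y ≤ a * c i + b * c i := by gcongr
  have hc : a * c i + b * c i = c i := by rw [← add_mul, hab, one_mul]
  rw [hfe]
  linarith

lemma trans_dot {m n : ℕ} (A : Matrix (Fin m) (Fin n) ℝ) (z : Fin m → ℝ) (v : Fin n → ℝ) :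
    (Aᵀ *ᵥ z) ⬝ᵥ v = z ⬝ᵥ (A *ᵥ v) := by
  rw [Matrix.mulVec_transpose, ← Matrix.dotProduct_mulVec]

lemma dualConeOf_convex {n : ℕ} (C : Set (Fin n → ℝ)) : Convex ℝ (dualConeOf C) := by
  intro x hx y hy a b ha hb _
  intro s hs
  have h1 := hx s hs; have h2 := hy s hs
  have : (a • x + b • y) ⬝ᵥ s = a * (x ⬝ᵥ s) + b * (y ⬝ᵥ s) := by
    simp [add_dotProduct, smul_dotProduct, smul_eq_mul]
  rw [this]
  positivity

lemma dualConeOf_smul {n : ℕ} (C : Set (Fin n → ℝ)) {t : ℝ} (ht : 0 ≤ t)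
    {x : Fin n → ℝ} (hx : x ∈ dualConeOf C) : t • x ∈ dualConeOf C := by
  intro s hs
  have := hx s hs
  rw [smul_dotProduct, smul_eq_mul]
  positivity

/-- `P_{A,R,S}` and `P_{Aᵀ,S*,−R*}` are sublinear and
`(P_{A,R,S})* = P_{Aᵀ,S*,−R*}`. -/
theorem stmt12 {m n : ℕ} (A : Matrix (Fin m) (Fin n) ℝ)
    (R : Set (Fin n → ℝ)) (S : Set (Fin m → ℝ))
    (hR : IsPolyhedralCone R) (hS : IsPolyhedralCone S) :
    IsSublinearMapping (solMap A R S) ∧ IsSublinearMapping (dualSolMap A R S) ∧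
    ∀ (w : Fin n → ℝ) (z : Fin m → ℝ),
      z ∈ upperAdjoint (solMap A R S) w ↔
        z ∈ dualConeOf S ∧ w - Aᵀ *ᵥ z ∈ dualConeOf R := by
  obtain ⟨hRpoly, hR0, hRcone⟩ := hR
  obtain ⟨hSpoly, hS0, hScone⟩ := hS
  have hRconv := hRpoly.convex'
  have hSconv := hSpoly.convex'
  refine ⟨⟨?_, ?_, ?_⟩, ⟨?_, ?_, ?_⟩, ?_⟩
  · exact ⟨hR0, by simpa using hS0⟩
  · rintro ⟨b₁, x₁⟩ ⟨hx₁R, hx₁S⟩ ⟨b₂, x₂⟩ ⟨hx₂R, hx₂S⟩ a b ha hb hab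
    refine ⟨hRconv hx₁R hx₂R ha hb hab, ?_⟩
    have : A *ᵥ (a • x₁ + b • x₂) - (a • b₁ + b • b₂)
        = a • (A *ᵥ x₁ - b₁) + b • (A *ᵥ x₂ - b₂) := by
      simp [Matrix.mulVec_add, Matrix.mulVec_smul]
      module
    rw [show ((a • (b₁, x₁) + b • (b₂, x₂)).2 : Fin n → ℝ) = a • x₁ + b • x₂ from rfl]
    show A *ᵥ (a • x₁ + b • x₂) - (a • b₁ + b • b₂) ∈ S
    rw [this]
    exact hSconv hx₁S hx₂S ha hb hab
  · rintro t ht ⟨b, x⟩ ⟨hxR, hxS⟩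
    refine ⟨hRcone t ht x hxR, ?_⟩
    show A *ᵥ (t • x) - t • b ∈ S
    have : A *ᵥ (t • x) - t • b = t • (A *ᵥ x - b) := by
      simp [Matrix.mulVec_smul, smul_sub]
    rw [this]
    exact hScone t ht _ hxS
  · refine ⟨fun s hs => by simp, fun x hx => by simp⟩
  · rintro ⟨c₁, y₁⟩ ⟨hy₁S, hy₁R⟩ ⟨c₂, y₂⟩ ⟨hy₂S, hy₂R⟩ a b ha hb hab
    refine ⟨dualConeOf_convex S hy₁S hy₂S ha hb hab, ?_⟩
    show (a • c₁ + b • c₂) - Aᵀ *ᵥ (a • y₁ + b • y₂) ∈ dualConeOf R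
    have : (a • c₁ + b • c₂) - Aᵀ *ᵥ (a • y₁ + b • y₂)
        = a • (c₁ - Aᵀ *ᵥ y₁) + b • (c₂ - Aᵀ *ᵥ y₂) := by
      simp [Matrix.mulVec_add, Matrix.mulVec_smul]
      module
    rw [this]
    exact dualConeOf_convex R hy₁R hy₂R ha hb hab
  · rintro t ht ⟨c, y⟩ ⟨hyS, hyR⟩
    refine ⟨dualConeOf_smul S ht hyS, ?_⟩
    show t • c - Aᵀ *ᵥ (t • y) ∈ dualConeOf R
    have : t • c - Aᵀ *ᵥ (t • y) = t • (c - Aᵀ *ᵥ y) := by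
      simp [Matrix.mulVec_smul, smul_sub]
    rw [this]
    exact dualConeOf_smul R ht hyR
  · intro w z
    constructor
    · intro h
      constructor
      · intro s hs
        have := h (-s) 0 ⟨hR0, by simpa using hs⟩
        simpa [dotProduct_neg] using this
      · intro x hx
        have := h (A *ᵥ x) x ⟨hx, by simpa using hS0⟩
        have hd : (w - Aᵀ *ᵥ z) ⬝ᵥ x = w ⬝ᵥ x - z ⬝ᵥ (A *ᵥ x) := by
          rw [sub_dotProduct, trans_dot]
        rw [hd]
        linarith
    · rintro ⟨hzS, hzR⟩ u v ⟨hvR, hvS⟩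
      have h1 : 0 ≤ (w - Aᵀ *ᵥ z) ⬝ᵥ v := hzR v hvR
      have h2 : 0 ≤ z ⬝ᵥ (A *ᵥ v - u) := hzS _ hvS
      have hd : (w - Aᵀ *ᵥ z) ⬝ᵥ v = w ⬝ᵥ v - z ⬝ᵥ (A *ᵥ v) := by
        rw [sub_dotProduct, trans_dot]
      have hd2 : z ⬝ᵥ (A *ᵥ v - u) = z ⬝ᵥ (A *ᵥ v) - z ⬝ᵥ u := by
        rw [dotProduct_sub]
      linarith [hd ▸ h1, hd2 ▸ h2]
end

section
/- Let A ∈ ℝ^{m×n} and suppose the primal Slater condition holds: there exists x ∈ ℝ^n with Ax = 0 and x > 0 (componentwise). Then the Hoffman constant of the solution mapping P_A satisfies H(P_A) = 1 / inf { ‖Ay‖ : y ∈ ℝ^n, Ay ∉ {Ax : x ≥ 0, ‖x‖ ≤ 1} }. -/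
open Matrix Set

section Aux

/-- Upper bound for subadditive absolutely homogeneous functions. -/
lemma aux_seminorm_upper {k : ℕ} (f : (Fin k → ℝ) → ℝ)
    (hs : ∀ a (x : Fin k → ℝ), f (a • x) = |a| * f x)
    (ht : ∀ x y, f (x + y) ≤ f x + f y) :
    ∃ C : ℝ, 0 ≤ C ∧ ∀ x, f x ≤ C * ‖x‖ := by
  have hf0 : f 0 = 0 := by
    have := hs 0 0; simpa using this
  have hnn : ∀ x, 0 ≤ f x := by
    intro x
    have h1 : f (-x) = f x := by
      have := hs (-1) x; simpa using this
    have h2 := ht x (-x)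
    rw [add_neg_cancel, hf0, h1] at h2
    linarith
  refine ⟨∑ i, f (Pi.single i 1), Finset.sum_nonneg fun i _ => hnn _, fun x => ?_⟩
  have hx : x = ∑ i, x i • (Pi.single i (1:ℝ) : Fin k → ℝ) := by
    have := pi_eq_sum_univ x
    convert this using 3 with i
    ext j; simp [Pi.single_apply, eq_comm]
  calc f x = f (∑ i, x i • (Pi.single i (1:ℝ) : Fin k → ℝ)) := by rw [← hx]
    _ ≤ ∑ i, f (x i • (Pi.single i (1:ℝ) : Fin k → ℝ)) := by
        classical
        exact Finset.le_sum_of_subadditive f hf0.le ht _ _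
    _ = ∑ i, |x i| * f (Pi.single i 1) := by simp [hs]
    _ ≤ ∑ i, ‖x‖ * f (Pi.single i 1) := by
        refine Finset.sum_le_sum fun i _ => ?_
        exact mul_le_mul_of_nonneg_right
          (by rw [← Real.norm_eq_abs]; exact norm_le_pi_norm x i) (hnn _)
    _ = (∑ i, f (Pi.single i 1)) * ‖x‖ := by rw [← Finset.mul_sum, mul_comm]

/-- Lower bound for norms: equivalence with the sup norm. -/
lemma aux_norm_lower {k : ℕ} (f : (Fin k → ℝ) → ℝ)
    (hz : ∀ x, f x = 0 ↔ x = 0)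
    (hs : ∀ a (x : Fin k → ℝ), f (a • x) = |a| * f x)
    (ht : ∀ x y, f (x + y) ≤ f x + f y) :
    ∃ c : ℝ, 0 < c ∧ ∀ x, c * ‖x‖ ≤ f x := by
  have hnn : ∀ x, 0 ≤ f x := by
    intro x
    have h1 : f (-x) = f x := by have := hs (-1) x; simpa using this
    have h2 := ht x (-x)
    rw [add_neg_cancel, (hz 0).mpr rfl, h1] at h2
    linarith
  obtain ⟨C, hC0, hC⟩ := aux_seminorm_upper f hs ht
  have hcont : Continuous f := by
    have hlip : LipschitzWith (Real.toNNReal C) f := by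
      refine LipschitzWith.of_dist_le_mul fun x y => ?_
      have h1 : f x ≤ f y + f (x - y) := by
        have := ht y (x - y); simpa using this
      have h2 : f y ≤ f x + f (y - x) := by
        have := ht x (y - x); simpa using this
      have h3 : f (y - x) = f (x - y) := by
        have := hs (-1) (x - y); simpa [neg_sub] using this
      have h4 : f (x - y) ≤ C * ‖x - y‖ := hC _
      rw [Real.dist_eq, dist_eq_norm, Real.coe_toNNReal _ hC0, abs_le]
      constructor <;> nlinarith [hnn (y - x), hC (y - x)]
    exact hlip.continuous
  by_cases hk : k = 0
  · subst hk
    refine ⟨1, one_pos, fun x => ?_⟩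
    have hx0 : x = 0 := Subsingleton.elim _ _
    have hxz : ‖x‖ = 0 := by rw [hx0]; simp
    rw [one_mul, hxz]; exact hnn x
  have hsph : IsCompact (Metric.sphere (0 : Fin k → ℝ) 1) := isCompact_sphere _ _
  have hne : (Metric.sphere (0 : Fin k → ℝ) 1).Nonempty := by
    refine ⟨Pi.single (⟨0, Nat.pos_of_ne_zero hk⟩ : Fin k) (1:ℝ), ?_⟩
    simp [Pi.norm_single]
  obtain ⟨x0, hx0mem, hx0min⟩ := hsph.exists_isMinOn hne hcont.continuousOn
  have hx0norm : ‖x0‖ = 1 := by simpa using hx0mem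
  have hc0 : 0 < f x0 := by
    rcases lt_or_eq_of_le (hnn x0) with h | h
    · exact h
    · exfalso
      have := (hz x0).mp h.symm
      rw [this] at hx0norm; simp at hx0norm
  refine ⟨f x0, hc0, fun x => ?_⟩
  by_cases hx : x = 0
  · simp [hx, ((hz 0).mpr rfl : f 0 = 0)]
  · have hxn : (0:ℝ) < ‖x‖ := norm_pos_iff.mpr hx
    have hmem : ‖x‖⁻¹ • x ∈ Metric.sphere (0 : Fin k → ℝ) 1 := by
      simp [norm_smul, abs_of_pos (inv_pos.mpr hxn), inv_mul_cancel₀ hxn.ne']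
    have hmin := hx0min hmem
    have h2 : f (‖x‖⁻¹ • x) = ‖x‖⁻¹ * f x := by
      rw [hs, abs_of_pos (inv_pos.mpr hxn)]
    have h5 : f x0 ≤ ‖x‖⁻¹ * f x := by rw [← h2]; exact hmin
    calc f x0 * ‖x‖ ≤ (‖x‖⁻¹ * f x) * ‖x‖ := by nlinarith
      _ = f x := by field_simp

/-- A linear bounded right inverse for `mulVec` on its range. -/
lemma aux_bounded_preimage {m n : ℕ} (A : Matrix (Fin m) (Fin n) ℝ) :
    ∃ K : ℝ, 0 ≤ K ∧ ∀ y : Fin n → ℝ, ∃ z : Fin n → ℝ,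
      A *ᵥ z = A *ᵥ y ∧ ‖z‖ ≤ K * ‖A *ᵥ y‖ := by
  set f := Matrix.mulVecLin A with hf
  have hsurj : Function.Surjective f.rangeRestrict := f.surjective_rangeRestrict
  obtain ⟨h, hh⟩ := (f.rangeRestrict).exists_rightInverse_of_surjective
    (LinearMap.range_eq_top.mpr hsurj)
  have hcont : Continuous h := h.continuous_of_finiteDimensional
  set h' := LinearMap.toContinuousLinearMap h with hh'
  refine ⟨‖h'‖, h'.opNorm_nonneg, fun y => ?_⟩
  set p : LinearMap.range f := ⟨A *ᵥ y, ⟨y, rfl⟩⟩ with hp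
  refine ⟨h p, ?_, ?_⟩
  · have h2 : f.rangeRestrict (h p) = p := congrFun (congrArg DFunLike.coe hh) p
    have h3 : (f.rangeRestrict (h p) : Fin m → ℝ) = A *ᵥ y := by rw [h2]
    exact h3
  · have := h'.le_opNorm p
    have hpn : ‖p‖ = ‖A *ᵥ y‖ := rfl
    rw [hpn] at this
    exact this

/-- A positive lower bound for a positive function on `Fin k`. -/
lemma aux_pos_min {k : ℕ} (g : Fin k → ℝ) (hg : ∀ i, 0 < g i) :
    ∃ ε : ℝ, 0 < ε ∧ ∀ i, ε ≤ g i := by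
  rcases Nat.eq_zero_or_pos k with hk | hk
  · subst hk; exact ⟨1, one_pos, fun i => i.elim0⟩
  · obtain ⟨i0, -, hi0⟩ := Finset.exists_min_image Finset.univ g
      ⟨⟨0, hk⟩, Finset.mem_univ _⟩
    exact ⟨g i0, hg i0, fun i => hi0 i (Finset.mem_univ i)⟩

end Aux

section Aux2

/-- Slater bound: every point of the range has a nonnegative preimage with
controlled norm. -/
lemma aux_slater_bound {m n : ℕ} (A : Matrix (Fin m) (Fin n) ℝ)
    (νn : (Fin n → ℝ) → ℝ) (νm : (Fin m → ℝ) → ℝ) (hνn : IsNorm νn) (hνm : IsNorm νm)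
    (xh : Fin n → ℝ) (hxhA : A *ᵥ xh = 0) (hxh : ∀ i, 0 < xh i) :
    ∃ C : ℝ, 0 < C ∧ ∀ y : Fin n → ℝ, ∃ x : Fin n → ℝ,
      (∀ i, 0 ≤ x i) ∧ A *ᵥ x = A *ᵥ y ∧ νn x ≤ C * νm (A *ᵥ y) := by
  obtain ⟨Cn, hCn0, hCn⟩ := aux_seminorm_upper νn hνn.smul hνn.triangle
  obtain ⟨cm, hcm0, hcm⟩ := aux_norm_lower νm hνm.eq_zero_iff hνm.smul hνm.triangle
  obtain ⟨K, hK0, hK⟩ := aux_bounded_preimage A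
  obtain ⟨ε, hε0, hε⟩ := aux_pos_min xh hxh
  have hνxh : 0 ≤ νn xh := hνn.nonneg xh
  refine ⟨K / cm * (Cn + νn xh / ε) + 1, by positivity, fun y => ?_⟩
  obtain ⟨z, hzA, hz⟩ := hK y
  set t := ‖z‖ / ε with ht
  have ht0 : 0 ≤ t := by positivity
  refine ⟨z + t • xh, ?_, ?_, ?_⟩
  · intro i
    have h1 : |z i| ≤ ‖z‖ := by rw [← Real.norm_eq_abs]; exact norm_le_pi_norm z i
    have h2 : ‖z‖ ≤ t * xh i := by
      calc ‖z‖ = t * ε := by rw [ht, div_mul_cancel₀ _ hε0.ne']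
        _ ≤ t * xh i := mul_le_mul_of_nonneg_left (hε i) ht0
    have := abs_le.mp h1
    simp only [Pi.add_apply, Pi.smul_apply, smul_eq_mul]
    linarith [this.1]
  · rw [mulVec_add, mulVec_smul, hxhA, smul_zero, add_zero, hzA]
  · have h1 : νn (z + t • xh) ≤ νn z + t * νn xh := by
      have := hνn.triangle z (t • xh)
      rw [hνn.smul, abs_of_nonneg ht0] at this
      exact this
    have h2 : νn z ≤ Cn * ‖z‖ := hCn z
    have h3 : t * νn xh = ‖z‖ * (νn xh / ε) := by rw [ht]; ring
    have h4 : ‖z‖ ≤ K * ‖A *ᵥ y‖ := hz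
    have h5 : cm * ‖A *ᵥ y‖ ≤ νm (A *ᵥ y) := hcm _
    have h6 : ‖A *ᵥ y‖ ≤ νm (A *ᵥ y) / cm := by
      rw [le_div_iff₀ hcm0]; linarith
    have h7 : νn (z + t • xh) ≤ ‖z‖ * (Cn + νn xh / ε) := by
      rw [mul_add]
      linarith [h1, h2, h3]
    have h8 : ‖z‖ * (Cn + νn xh / ε) ≤ (K * (νm (A *ᵥ y) / cm)) * (Cn + νn xh / ε) := by
      have hf : (0:ℝ) ≤ Cn + νn xh / ε := by positivity
      have : ‖z‖ ≤ K * (νm (A *ᵥ y) / cm) := by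
        calc ‖z‖ ≤ K * ‖A *ᵥ y‖ := h4
          _ ≤ K * (νm (A *ᵥ y) / cm) := mul_le_mul_of_nonneg_left h6 hK0
      exact mul_le_mul_of_nonneg_right this hf
    have h9 : (K * (νm (A *ᵥ y) / cm)) * (Cn + νn xh / ε)
        = (K / cm * (Cn + νn xh / ε)) * νm (A *ᵥ y) := by ring
    have h10 : (K / cm * (Cn + νn xh / ε)) * νm (A *ᵥ y)
        ≤ (K / cm * (Cn + νn xh / ε) + 1) * νm (A *ᵥ y) := by
      have := hνm.nonneg (A *ᵥ y)
      nlinarith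
    linarith
end Aux2

/-- under the primal Slater condition `Ax = 0, x > 0`,
`H(P_A) = 1 / inf { ‖Ay‖ : Ay ∉ {Ax : x ≥ 0, ‖x‖ ≤ 1} }`. -/
theorem stmt13 {m n : ℕ} (A : Matrix (Fin m) (Fin n) ℝ)
    (νn : (Fin n → ℝ) → ℝ) (νm : (Fin m → ℝ) → ℝ) (hνn : IsNorm νn) (hνm : IsNorm νm)
    (hSlater : ∃ x : Fin n → ℝ, A *ᵥ x = 0 ∧ ∀ i, 0 < x i) :
    hoffmanConst νm νn (PA A) =
      1 / sInf {r | ∃ y : Fin n → ℝ,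
        A *ᵥ y ∉ {w | ∃ x : Fin n → ℝ, (∀ i, 0 ≤ x i) ∧ νn x ≤ 1 ∧ w = A *ᵥ x} ∧
        r = νm (A *ᵥ y)} := by
  obtain ⟨xh, hxhA, hxh⟩ := hSlater
  set S : Set (Fin m → ℝ) :=
    {w | ∃ x : Fin n → ℝ, (∀ i, 0 ≤ x i) ∧ νn x ≤ 1 ∧ w = A *ᵥ x} with hSdef
  set T : Set ℝ := {r | ∃ y : Fin n → ℝ, A *ᵥ y ∉ S ∧ r = νm (A *ᵥ y)} with hTdef
  have hνn0 : νn 0 = 0 := (hνn.eq_zero_iff 0).mpr rfl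
  have h0S : (0 : Fin m → ℝ) ∈ S :=
    ⟨0, fun i => le_refl 0, by rw [hνn0]; exact zero_le_one, (mulVec_zero A).symm⟩
  -- the inverse mapping at a nonnegative point is a singleton
  have hinv : ∀ v : Fin n → ℝ, (∀ i, 0 ≤ v i) → invOf (PA A) v = {A *ᵥ v} := by
    intro v hv
    ext b
    simp only [invOf, PA, Set.mem_setOf_eq, Set.mem_singleton_iff]
    constructor
    · rintro ⟨-, h⟩; exact h.symm
    · intro h; exact ⟨hv, h.symm⟩
  have hdistsingle : ∀ (u a : Fin m → ℝ), distWith νm u {a} = νm (u - a) := by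
    intro u a
    simp [distWith, Set.image_singleton]
  rcases Set.eq_empty_or_nonempty T with hT | hT
  · -- degenerate case : every Ay lies in S, hence A = 0 and both sides vanish
    have hall : ∀ y : Fin n → ℝ, A *ᵥ y ∈ S := by
      intro y
      by_contra h
      exact Set.eq_empty_iff_forall_notMem.mp hT (νm (A *ᵥ y)) ⟨y, h, rfl⟩
    obtain ⟨CA, hCA0, hCA⟩ := aux_seminorm_upper (fun x => ‖A *ᵥ x‖)
      (fun a x => by simp [mulVec_smul, norm_smul])
      (fun x y => by simpa [mulVec_add] using norm_add_le (A *ᵥ x) (A *ᵥ y))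
    obtain ⟨cn, hcn0, hcn⟩ := aux_norm_lower νn hνn.eq_zero_iff hνn.smul hνn.triangle
    have hA0 : ∀ y : Fin n → ℝ, A *ᵥ y = 0 := by
      intro y
      by_contra hy
      have hy' : 0 < ‖A *ᵥ y‖ := norm_pos_iff.mpr hy
      set t := (CA / cn + 1) / ‖A *ᵥ y‖ with htdef
      have ht0 : 0 < t := by positivity
      obtain ⟨x, hx0, hx1, hxw⟩ := hall (t • y)
      -- hxw : A *ᵥ (t • y) = A *ᵥ x
      have h1 : ‖A *ᵥ x‖ ≤ CA * ‖x‖ := hCA x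
      have h2 : ‖x‖ ≤ νn x / cn := by
        rw [le_div_iff₀ hcn0]; linarith [hcn x]
      have h3 : ‖A *ᵥ x‖ ≤ CA / cn := by
        calc ‖A *ᵥ x‖ ≤ CA * ‖x‖ := h1
          _ ≤ CA * (νn x / cn) := mul_le_mul_of_nonneg_left h2 hCA0
          _ ≤ CA * (1 / cn) := by
              have : νn x / cn ≤ 1 / cn := by
                rw [div_le_div_iff₀ hcn0 hcn0]; nlinarith
              exact mul_le_mul_of_nonneg_left this hCA0
          _ = CA / cn := by ring
      have h4 : ‖A *ᵥ (t • y)‖ = CA / cn + 1 := by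
        rw [mulVec_smul, norm_smul, Real.norm_eq_abs, abs_of_pos ht0, htdef]
        field_simp
      rw [← hxw] at h3
      rw [h4] at h3
      linarith
    have hHS : {r | ∃ u v, u ∈ domOf (PA A) ∧ v ∈ imOf (PA A) ∧ v ∉ (PA A) u ∧
        r = distWith νn v ((PA A) u) / distWith νm u (invOf (PA A) v)} = ∅ := by
      rw [Set.eq_empty_iff_forall_notMem]
      rintro r ⟨u, v, hu, hv, hnv, -⟩
      obtain ⟨x, hx⟩ := hu
      obtain ⟨b, hvb⟩ := Set.mem_iUnion.mp hv
      exact hnv ⟨hvb.1, by rw [hA0 v, ← hx.2, hA0 x]⟩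
    rw [hoffmanConst, hHS, Real.sSup_empty, hT, Real.sInf_empty, div_zero]
  · -- main case
    obtain ⟨C, hCpos, hC⟩ := aux_slater_bound A νn νm hνn hνm xh hxhA hxh
    have hδlb : ∀ r ∈ T, 1 / C ≤ r := by
      rintro r ⟨y, hy, rfl⟩
      by_contra h
      push_neg at h
      obtain ⟨x, hx0, hxA, hxν⟩ := hC y
      refine hy ⟨x, hx0, ?_, hxA.symm⟩
      have : C * νm (A *ᵥ y) < C * (1 / C) := by
        exact mul_lt_mul_of_pos_left h hCpos
      rw [mul_one_div, div_self hCpos.ne'] at this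
      linarith
    have hTbdd : BddBelow T := ⟨1 / C, hδlb⟩
    set δ := sInf T with hδdef
    have hδpos : 0 < δ := lt_of_lt_of_le (by positivity) (le_csInf hT hδlb)
    have hTpos : ∀ r ∈ T, 0 < r := fun r hr =>
      lt_of_lt_of_le (by positivity : (0:ℝ) < 1 / C) (hδlb r hr)
    -- elements of the Hoffman set are bounded by 1/δ
    have hub : ∀ r ∈ {r | ∃ u v, u ∈ domOf (PA A) ∧ v ∈ imOf (PA A) ∧ v ∉ (PA A) u ∧
        r = distWith νn v ((PA A) u) / distWith νm u (invOf (PA A) v)}, r ≤ 1 / δ := by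
      rintro r ⟨u, v, hu, hv, hnv, rfl⟩
      obtain ⟨x₀, hx₀⟩ := hu
      have hv0 : ∀ i, 0 ≤ v i := by
        obtain ⟨b, hvb⟩ := Set.mem_iUnion.mp hv; exact hvb.1
      have hAvu : A *ᵥ v ≠ u := fun h => hnv ⟨hv0, h⟩
      have hw0 : u - A *ᵥ v ≠ 0 := sub_ne_zero_of_ne (Ne.symm hAvu)
      have hD : distWith νm u (invOf (PA A) v) = νm (u - A *ᵥ v) := by
        rw [hinv v hv0, hdistsingle]
      have hDpos : 0 < νm (u - A *ᵥ v) := by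
        rcases lt_or_eq_of_le (hνm.nonneg (u - A *ᵥ v)) with h | h
        · exact h
        · exact absurd ((hνm.eq_zero_iff _).mp h.symm) hw0
      set N := distWith νn v ((PA A) u) with hNdef
      have hNnn : 0 ≤ N := Real.sInf_nonneg (by rintro _ ⟨z, -, rfl⟩; exact hνn.nonneg _)
      have key : ∀ δ', 0 < δ' → δ' < δ → N * δ' ≤ νm (u - A *ᵥ v) := by
        intro δ' hδ'0 hδ'δ
        set s := δ' / νm (u - A *ᵥ v) with hsdef
        have hs0 : 0 < s := by positivity
        have hpw : A *ᵥ (s • (x₀ - v)) = s • (u - A *ᵥ v) := by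
          rw [mulVec_smul, mulVec_sub, hx₀.2]
        have hpν : νm (A *ᵥ (s • (x₀ - v))) = δ' := by
          rw [hpw, hνm.smul, abs_of_pos hs0, hsdef]
          field_simp
        have hpS : A *ᵥ (s • (x₀ - v)) ∈ S := by
          by_contra hns
          have hmem : νm (A *ᵥ (s • (x₀ - v))) ∈ T := ⟨_, hns, rfl⟩
          have := csInf_le hTbdd hmem
          rw [hpν] at this
          exact absurd this (not_le.mpr hδ'δ)
        obtain ⟨xp, hxp0, hxp1, hxpw⟩ := hpS
        -- hxpw : A *ᵥ (s • (x₀ - v)) = A *ᵥ xp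
        have hAxp : A *ᵥ xp = s • (u - A *ᵥ v) := by rw [← hxpw, hpw]
        set z := v + s⁻¹ • xp with hzdef
        have hz : z ∈ PA A u := by
          constructor
          · intro i
            have : 0 ≤ s⁻¹ * xp i := mul_nonneg (inv_pos.mpr hs0).le (hxp0 i)
            simp only [hzdef, Pi.add_apply, Pi.smul_apply, smul_eq_mul]
            linarith [hv0 i]
          · rw [hzdef, mulVec_add, mulVec_smul, hAxp, smul_smul,
              inv_mul_cancel₀ hs0.ne', one_smul]
            abel
        have hNle : N ≤ νn (v - z) :=
          csInf_le ⟨0, by rintro _ ⟨w', -, rfl⟩; exact hνn.nonneg _⟩ ⟨z, hz, rfl⟩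
        have hvz : νn (v - z) = s⁻¹ * νn xp := by
          have : v - z = (-s⁻¹) • xp := by
            rw [hzdef]; ext i
            simp only [Pi.sub_apply, Pi.add_apply, Pi.smul_apply, smul_eq_mul]
            ring
          rw [this, hνn.smul, abs_neg, abs_of_pos (inv_pos.mpr hs0)]
        have hfin : N ≤ s⁻¹ := by
          rw [hvz] at hNle
          calc N ≤ s⁻¹ * νn xp := hNle
            _ ≤ s⁻¹ * 1 := mul_le_mul_of_nonneg_left hxp1 (inv_pos.mpr hs0).le
            _ = s⁻¹ := mul_one _
        have hsinv : s⁻¹ = νm (u - A *ᵥ v) / δ' := by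
          rw [hsdef]; field_simp
        rw [hsinv] at hfin
        calc N * δ' ≤ (νm (u - A *ᵥ v) / δ') * δ' :=
              mul_le_mul_of_nonneg_right hfin hδ'0.le
          _ = νm (u - A *ᵥ v) := by field_simp
      have hNδ : N * δ ≤ νm (u - A *ᵥ v) := by
        by_contra hcon
        push_neg at hcon
        have hN0 : 0 < N := by nlinarith
        have h1 : νm (u - A *ᵥ v) / N < δ := by
          rw [div_lt_iff₀ hN0]; linarith [mul_comm N δ]
        obtain ⟨δ', hδ'1, hδ'2⟩ := exists_between h1
        have hδ'0 : 0 < δ' := lt_trans (by positivity) hδ'1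
        have := key δ' hδ'0 hδ'2
        rw [div_lt_iff₀ hN0] at hδ'1
        linarith [mul_comm N δ']
      rw [hD, div_le_div_iff₀ hDpos hδpos, one_mul]
      exact hNδ
    have hBdd : BddAbove {r | ∃ u v, u ∈ domOf (PA A) ∧ v ∈ imOf (PA A) ∧ v ∉ (PA A) u ∧
        r = distWith νn v ((PA A) u) / distWith νm u (invOf (PA A) v)} := ⟨1 / δ, hub⟩
    -- constructing elements of the Hoffman set
    have helem : ∀ y : Fin n → ℝ, A *ᵥ y ∉ S →
        ∃ r ∈ {r | ∃ u v, u ∈ domOf (PA A) ∧ v ∈ imOf (PA A) ∧ v ∉ (PA A) u ∧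
          r = distWith νn v ((PA A) u) / distWith νm u (invOf (PA A) v)},
          1 / νm (A *ᵥ y) ≤ r := by
      intro y hy
      obtain ⟨x, hx0, hxA, -⟩ := hC y
      have hu : A *ᵥ y ∈ domOf (PA A) := ⟨x, hx0, hxA⟩
      have h0im : (0 : Fin n → ℝ) ∈ imOf (PA A) :=
        Set.mem_iUnion.mpr ⟨0, fun i => le_refl 0, mulVec_zero A⟩
      have hne0 : A *ᵥ y ≠ 0 := by
        intro h; rw [h] at hy; exact hy h0S
      have hnmpos : 0 < νm (A *ᵥ y) := by
        rcases lt_or_eq_of_le (hνm.nonneg (A *ᵥ y)) with h | h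
        · exact h
        · exact absurd ((hνm.eq_zero_iff _).mp h.symm) hne0
      have hnotin : (0 : Fin n → ℝ) ∉ PA A (A *ᵥ y) := by
        rintro ⟨-, h⟩
        exact hne0 (by rw [← h, mulVec_zero])
      refine ⟨_, ⟨A *ᵥ y, 0, hu, h0im, hnotin, rfl⟩, ?_⟩
      have hinv0 : distWith νm (A *ᵥ y) (invOf (PA A) 0) = νm (A *ᵥ y) := by
        rw [hinv 0 (fun i => le_refl 0), hdistsingle, mulVec_zero, sub_zero]
      have hnum : 1 ≤ distWith νn 0 (PA A (A *ᵥ y)) := by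
        apply le_csInf
        · exact ⟨_, ⟨x, ⟨hx0, hxA⟩, rfl⟩⟩
        · rintro _ ⟨z, hz, rfl⟩
          show (1:ℝ) ≤ νn (0 - z)
          have hzn : νn (0 - z) = νn z := by
            have := hνn.smul (-1) z
            simp only [neg_smul, one_smul, abs_neg, abs_one, one_mul] at this
            rw [zero_sub, this]
          rw [hzn]
          by_contra h
          push_neg at h
          exact hy ⟨z, hz.1, h.le, hz.2.symm⟩
      rw [hinv0, div_le_div_iff₀ hnmpos hnmpos, one_mul]
      nlinarith
    have hHSne : {r | ∃ u v, u ∈ domOf (PA A) ∧ v ∈ imOf (PA A) ∧ v ∉ (PA A) u ∧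
        r = distWith νn v ((PA A) u) / distWith νm u (invOf (PA A) v)}.Nonempty := by
      obtain ⟨r0, y0, hy0, -⟩ := hT
      obtain ⟨r, hr, -⟩ := helem y0 hy0
      exact ⟨r, hr⟩
    rw [hoffmanConst]
    apply le_antisymm
    · exact csSup_le hHSne hub
    · refine le_of_forall_lt fun c hc => ?_
      rcases le_or_gt c 0 with hc0 | hc0
      · obtain ⟨r0, y0, hy0, -⟩ := hT
        obtain ⟨r, hr, hrge⟩ := helem y0 hy0
        have hnmpos : 0 < νm (A *ᵥ y0) := by
          rcases lt_or_eq_of_le (hνm.nonneg (A *ᵥ y0)) with h | h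
          · exact h
          · exfalso
            apply hy0
            rw [(hνm.eq_zero_iff _).mp h.symm]
            exact h0S
        calc c ≤ 0 := hc0
          _ < 1 / νm (A *ᵥ y0) := by positivity
          _ ≤ r := hrge
          _ ≤ _ := le_csSup hBdd hr
      · have h1c : δ < 1 / c := by
          rw [lt_div_iff₀ hc0]
          rw [lt_div_iff₀ hδpos] at hc
          linarith [mul_comm δ c, mul_comm c δ]
        obtain ⟨r', hr'T, hr'lt⟩ := exists_lt_of_csInf_lt hT h1c
        obtain ⟨y, hy, hr'eq⟩ := hr'T
        obtain ⟨r, hr, hrge⟩ := helem y hy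
        have hr'pos : 0 < r' := hTpos r' ⟨y, hy, hr'eq⟩
        have : c < 1 / r' := by
          rw [lt_div_iff₀ hr'pos]
          rw [lt_div_iff₀ hc0] at hr'lt
          linarith [mul_comm r' c, mul_comm c r']
        calc c < 1 / r' := this
          _ = 1 / νm (A *ᵥ y) := by rw [hr'eq]
          _ ≤ r := hrge
          _ ≤ _ := le_csSup hBdd hr
end
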